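/- arXiv:1112.1970 — 6 statements merged into one kernel-verified Lean document; each statement's English description precedes it below -/
import Mathlib

section
/- For every real constant c > 0 there exists a finite nonempty subset A of ℤ² such that, in the Cayley graph of ℤ² with the standard generating set, |∂A| · depth(A) < c · |A| (equivalently |∂A|/|A| < c/depth(A)). -/
/-- The (outer vertex) boundary of a set `A` in a simple graph. -/
def SimpleGraph.boundarySet {V : Type*} (G : SimpleGraph V) (A : Set V) : Set V :=
  {u | u ∉ A ∧ ∃ v ∈ A, G.Adj u v}

/-- The graph distance from a vertex to a set of vertices. -/
noncomputable def SimpleGraph.distToSet {V : Type*} (G : SimpleGraph V) (u : V) (A : Set V) : ℕ :=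
  sInf ((fun v => G.dist u v) '' A)

/-- The depth of a set: the supremum over `u ∈ A` of the distance from `u` to the complement. -/
noncomputable def SimpleGraph.depthSet {V : Type*} (G : SimpleGraph V) (A : Set V) : ℕ :=
  sSup ((fun u => G.distToSet u Aᶜ) '' A)

/-- The Cayley graph of the lattice ℤ² with its standard generating set:
`u` and `v` are adjacent iff they differ by `1` in exactly one coordinate. -/
def zsqGraph : SimpleGraph (ℤ × ℤ) where
  Adj u v := |u.1 - v.1| + |u.2 - v.2| = 1
  symm := by
    constructor
    intro u v h
    rw [abs_sub_comm v.1, abs_sub_comm v.2]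
    exact h
  loopless := by constructor; intro u h; simp at h

/-- The Cayley graph of a group `G` with respect to a generating set `S`. -/
def cayleyGraph {G : Type*} [Group G] (S : Set G) : SimpleGraph G where
  Adj x y := x ≠ y ∧ x⁻¹ * y ∈ S ∪ S⁻¹
  symm := by
    constructor
    rintro x y ⟨hxy, hmem⟩
    refine ⟨hxy.symm, ?_⟩
    have h : y⁻¹ * x = (x⁻¹ * y)⁻¹ := by group
    rw [h]
    rcases hmem with h' | h'
    · exact Or.inr (Set.inv_mem_inv.mpr h')
    · exact Or.inl (by simpa using h')
  loopless := ⟨fun x h => h.1 rfl⟩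

/-- `ballCard S n` is the number of vertices in the ball of radius `n`
(centered at the identity) in the Cayley graph of `G` with respect to `S`. -/
noncomputable def ballCard {G : Type*} [Group G] (S : Set G) (n : ℕ) : ℕ :=
  {x : G | (cayleyGraph S).dist 1 x ≤ n}.ncard

lemma zsq_walk : ∀ (n : ℕ) (u v : ℤ × ℤ), (u.1 - v.1).natAbs + (u.2 - v.2).natAbs ≤ n →
    ∃ p : zsqGraph.Walk u v, p.length ≤ n := by
  intro n
  induction n with
  | zero =>
    rintro ⟨ux, uy⟩ ⟨vx, vy⟩ h
    dsimp only at h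
    have h1 : ux = vx := by omega
    have h2 : uy = vy := by omega
    subst h1; subst h2
    exact ⟨SimpleGraph.Walk.nil, by simp⟩
  | succ n ih =>
    rintro ⟨ux, uy⟩ ⟨vx, vy⟩ h
    dsimp only at h
    rcases eq_or_ne ux vx with h1 | h1
    · rcases eq_or_ne uy vy with h2 | h2
      · subst h1; subst h2
        exact ⟨SimpleGraph.Walk.nil, by simp⟩
      · rcases h2.lt_or_gt with hlt | hlt
        · have hadj : zsqGraph.Adj (ux, uy) (ux, uy + 1) := by
            show |ux - ux| + |uy - (uy + 1)| = 1
            have : uy - (uy + 1) = -1 := by ring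
            rw [sub_self, this]; norm_num
          obtain ⟨p, hp⟩ := ih (ux, uy + 1) (vx, vy) (by dsimp only; omega)
          exact ⟨SimpleGraph.Walk.cons hadj p, by simp; omega⟩
        · have hadj : zsqGraph.Adj (ux, uy) (ux, uy - 1) := by
            show |ux - ux| + |uy - (uy - 1)| = 1
            have : uy - (uy - 1) = 1 := by ring
            rw [sub_self, this]; norm_num
          obtain ⟨p, hp⟩ := ih (ux, uy - 1) (vx, vy) (by dsimp only; omega)
          exact ⟨SimpleGraph.Walk.cons hadj p, by simp; omega⟩
    · rcases h1.lt_or_gt with hlt | hlt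
      · have hadj : zsqGraph.Adj (ux, uy) (ux + 1, uy) := by
          show |ux - (ux + 1)| + |uy - uy| = 1
          have : ux - (ux + 1) = -1 := by ring
          rw [sub_self, this]; norm_num
        obtain ⟨p, hp⟩ := ih (ux + 1, uy) (vx, vy) (by dsimp only; omega)
        exact ⟨SimpleGraph.Walk.cons hadj p, by simp; omega⟩
      · have hadj : zsqGraph.Adj (ux, uy) (ux - 1, uy) := by
          show |ux - (ux - 1)| + |uy - uy| = 1
          have : ux - (ux - 1) = 1 := by ring
          rw [sub_self, this]; norm_num
        obtain ⟨p, hp⟩ := ih (ux - 1, uy) (vx, vy) (by dsimp only; omega)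
        exact ⟨SimpleGraph.Walk.cons hadj p, by simp; omega⟩

lemma zsq_dist_le (u v : ℤ × ℤ) (n : ℕ)
    (h : (u.1 - v.1).natAbs + (u.2 - v.2).natAbs ≤ n) : zsqGraph.dist u v ≤ n := by
  obtain ⟨p, hp⟩ := zsq_walk n u v h
  exact le_trans (SimpleGraph.dist_le p) hp


set_option maxHeartbeats 1000000 in
lemma zsq_construction (k M N : ℕ) (hk1 : 1 ≤ k) (hM_def : M = 2 * k + 3)
    (hN_def : N = 2 * k * M) :
    ∃ A : Set (ℤ × ℤ), A.Finite ∧ A.Nonempty ∧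
      (zsqGraph.boundarySet A).ncard ≤ 2 * (N + 2) + (N + 2) * 2 + M * M ∧
      zsqGraph.depthSet A ≤ 4 * k ∧ A.ncard = N * N - M * M := by
  set n : ℤ := (N : ℤ) with hn_def
  have hkz : (0:ℤ) < 2 * (k:ℤ) := by positivity
  have hkk : (1:ℤ) ≤ (k:ℤ) := by exact_mod_cast hk1
  have hMval : (M:ℤ) = 2*(k:ℤ)+3 := by rw [hM_def]; push_cast; ring
  have hnval : n = 2 * (k:ℤ) * (M:ℤ) := by rw [hn_def, hN_def]; push_cast; ring
  have hn2 : (2:ℤ) ≤ n := by nlinarith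
  set Hf : Finset (ℤ × ℤ) :=
    (Finset.Icc (0:ℤ) ((M:ℤ) - 1) ×ˢ Finset.Icc (0:ℤ) ((M:ℤ) - 1)).image
      (fun p => ((2*(k:ℤ)) * p.1, (2*(k:ℤ)) * p.2)) with hHf_def
  set Sf : Finset (ℤ × ℤ) := Finset.Icc (0:ℤ) (n-1) ×ˢ Finset.Icc (0:ℤ) (n-1) with hSf_def
  set Af : Finset (ℤ × ℤ) := Sf \ Hf with hAf_def
  -- membership characterizations
  have hmemS : ∀ p : ℤ × ℤ, p ∈ Sf ↔ (0 ≤ p.1 ∧ p.1 ≤ n - 1) ∧ (0 ≤ p.2 ∧ p.2 ≤ n - 1) := by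
    intro p
    simp [hSf_def, Finset.mem_product, Finset.mem_Icc]
  have hmemH : ∀ p : ℤ × ℤ, p ∈ Hf ↔ ∃ i j : ℤ, 0 ≤ i ∧ i ≤ (M:ℤ) - 1 ∧ 0 ≤ j ∧ j ≤ (M:ℤ) - 1 ∧
      p = ((2*(k:ℤ)) * i, (2*(k:ℤ)) * j) := by
    intro p
    simp only [hHf_def, Finset.mem_image, Finset.mem_product, Finset.mem_Icc, Prod.exists]
    constructor
    · rintro ⟨i, j, ⟨⟨hi1, hi2⟩, hj1, hj2⟩, rfl⟩
      exact ⟨i, j, hi1, hi2, hj1, hj2, rfl⟩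
    · rintro ⟨i, j, hi1, hi2, hj1, hj2, rfl⟩
      exact ⟨i, j, ⟨⟨hi1, hi2⟩, hj1, hj2⟩, rfl⟩
  -- H ⊆ S
  have hHS : Hf ⊆ Sf := by
    intro p hp
    rw [hmemH] at hp
    obtain ⟨i, j, hi1, hi2, hj1, hj2, rfl⟩ := hp
    rw [hmemS]
    constructor <;> constructor <;> dsimp only <;> nlinarith
  -- cardinalities
  have hcardIccM : (Finset.Icc (0:ℤ) ((M:ℤ) - 1)).card = M := by
    rw [Int.card_Icc]; simp
  have hcardIccn : (Finset.Icc (0:ℤ) (n-1)).card = N := by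
    rw [Int.card_Icc]; simp [hn_def]
  have hcardS : Sf.card = N * N := by
    rw [hSf_def, Finset.card_product, hcardIccn]
  have hcardH : Hf.card = M * M := by
    rw [hHf_def, Finset.card_image_of_injective, Finset.card_product, hcardIccM]
    intro a b hab
    simp only [Prod.mk.injEq] at hab
    have h1 : a.1 = b.1 := mul_left_cancel₀ (by omega) hab.1
    have h2 : a.2 = b.2 := mul_left_cancel₀ (by omega) hab.2
    exact Prod.ext h1 h2
  have hcardA : Af.card = N * N - M * M := by
    rw [hAf_def, Finset.card_sdiff_of_subset hHS, hcardS, hcardH]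
  -- A nonempty
  have hAne : ((Af : Set (ℤ × ℤ))).Nonempty := by
    refine ⟨(1, 0), ?_⟩
    rw [Finset.mem_coe, hAf_def, Finset.mem_sdiff]
    constructor
    · rw [hmemS]; constructor <;> constructor <;> dsimp only <;> omega
    · rw [hmemH]
      rintro ⟨i, j, hi1, hi2, hj1, hj2, hp⟩
      simp only [Prod.mk.injEq] at hp
      have h2 : (2:ℤ) ∣ 1 := ⟨(k:ℤ)*i, by rw [hp.1]; ring⟩
      norm_num at h2
  -- depth bound
  have hdepth : zsqGraph.depthSet (Af : Set (ℤ × ℤ)) ≤ 4 * k := by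
    unfold SimpleGraph.depthSet
    apply csSup_le (hAne.image _)
    rintro x ⟨u, hu, rfl⟩
    unfold SimpleGraph.distToSet
    have huS : u ∈ Sf := by
      rw [Finset.mem_coe, hAf_def, Finset.mem_sdiff] at hu
      exact hu.1
    rw [hmemS] at huS
    set v : ℤ × ℤ := ((2*(k:ℤ)) * (u.1 / (2*(k:ℤ))), (2*(k:ℤ)) * (u.2 / (2*(k:ℤ)))) with hv_def
    have hvH : v ∈ Hf := by
      rw [hmemH]
      refine ⟨u.1 / (2*(k:ℤ)), u.2 / (2*(k:ℤ)), ?_, ?_, ?_, ?_, rfl⟩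
      · exact Int.ediv_nonneg huS.1.1 hkz.le
      · have : u.1 / (2*(k:ℤ)) < (M:ℤ) := by
          rw [Int.ediv_lt_iff_lt_mul hkz]
          nlinarith [huS.1.2]
        omega
      · exact Int.ediv_nonneg huS.2.1 hkz.le
      · have : u.2 / (2*(k:ℤ)) < (M:ℤ) := by
          rw [Int.ediv_lt_iff_lt_mul hkz]
          nlinarith [huS.2.2]
        omega
    have hvc : v ∈ ((Af : Set (ℤ × ℤ)))ᶜ := by
      simp only [Set.mem_compl_iff, Finset.mem_coe, hAf_def, Finset.mem_sdiff, not_and, not_not]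
      intro _; exact hvH
    have hdist : zsqGraph.dist u v ≤ 4 * k := by
      apply zsq_dist_le
      have e1 : u.1 - v.1 = u.1 % (2*(k:ℤ)) := by
        rw [hv_def]; dsimp only
        rw [Int.emod_def]
      have e2 : u.2 - v.2 = u.2 % (2*(k:ℤ)) := by
        rw [hv_def]; dsimp only
        rw [Int.emod_def]
      have m1 : 0 ≤ u.1 % (2*(k:ℤ)) := Int.emod_nonneg _ (by omega)
      have m2 : u.1 % (2*(k:ℤ)) < 2*(k:ℤ) := Int.emod_lt_of_pos _ hkz
      have m3 : 0 ≤ u.2 % (2*(k:ℤ)) := Int.emod_nonneg _ (by omega)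
      have m4 : u.2 % (2*(k:ℤ)) < 2*(k:ℤ) := Int.emod_lt_of_pos _ hkz
      rw [e1, e2]
      omega
    calc sInf ((fun w => zsqGraph.dist u w) '' ((Af : Set (ℤ × ℤ)))ᶜ)
        ≤ zsqGraph.dist u v := Nat.sInf_le ⟨v, hvc, rfl⟩
      _ ≤ 4 * k := hdist
  -- boundary bound
  set Bf : Finset (ℤ × ℤ) :=
    (({-1, n} : Finset ℤ) ×ˢ Finset.Icc (-1:ℤ) n) ∪
    (Finset.Icc (-1:ℤ) n ×ˢ ({-1, n} : Finset ℤ)) ∪ Hf with hBf_def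
  have hbsub : zsqGraph.boundarySet (Af : Set (ℤ × ℤ)) ⊆ (Bf : Set (ℤ × ℤ)) := by
    rintro u ⟨huA, v, hvA, hadj⟩
    have hvA' : v ∈ Af := Finset.mem_coe.mp hvA
    rw [hAf_def, Finset.mem_sdiff] at hvA'
    have hvS := (hmemS v).mp hvA'.1
    have hadj' : |u.1 - v.1| + |u.2 - v.2| = 1 := hadj
    have hb1 : -1 ≤ u.1 ∧ u.1 ≤ n := by
      have a1 := abs_nonneg (u.1 - v.1)
      have a2 := abs_nonneg (u.2 - v.2)
      have a3 := le_abs_self (u.1 - v.1)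
      have a4 := neg_abs_le (u.1 - v.1)
      constructor <;> nlinarith [hvS.1.1, hvS.1.2]
    have hb2 : -1 ≤ u.2 ∧ u.2 ≤ n := by
      have a1 := abs_nonneg (u.1 - v.1)
      have a2 := abs_nonneg (u.2 - v.2)
      have a3 := le_abs_self (u.2 - v.2)
      have a4 := neg_abs_le (u.2 - v.2)
      constructor <;> nlinarith [hvS.2.1, hvS.2.2]
    rw [Finset.mem_coe, hBf_def]
    by_cases hus : u ∈ Sf
    · have huH : u ∈ Hf := by
        by_contra hnot
        exact huA (by rw [Finset.mem_coe, hAf_def, Finset.mem_sdiff]; exact ⟨hus, hnot⟩)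
      exact Finset.mem_union_right _ huH
    · apply Finset.mem_union_left
      have husS := (hmemS u).not.mp hus
      have hcases : (u.1 = -1 ∨ u.1 = n) ∨ (u.2 = -1 ∨ u.2 = n) := by
        by_contra hcon
        push_neg at hcon
        exact husS ⟨⟨by omega, by omega⟩, by omega, by omega⟩
      rcases hcases with h1 | h2
      · apply Finset.mem_union_left
        rw [Finset.mem_product]
        constructor
        · simp only [Finset.mem_insert, Finset.mem_singleton]; exact h1
        · rw [Finset.mem_Icc]; exact hb2
      · apply Finset.mem_union_right
        rw [Finset.mem_product]
        constructor
        · rw [Finset.mem_Icc]; exact hb1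
        · simp only [Finset.mem_insert, Finset.mem_singleton]; exact h2
  have hcardIccn2 : (Finset.Icc (-1:ℤ) n).card = N + 2 := by
    rw [Int.card_Icc, hn_def]
    omega
  have hcard2 : (({-1, n} : Finset ℤ)).card ≤ 2 :=
    le_trans (Finset.card_insert_le _ _) (by simp)
  have hBcard : Bf.card ≤ 2 * (N + 2) + (N + 2) * 2 + M * M := by
    rw [hBf_def]
    apply le_trans (Finset.card_union_le _ _)
    rw [hcardH]
    apply Nat.add_le_add_right
    apply le_trans (Finset.card_union_le _ _)
    apply add_le_add
    · rw [Finset.card_product, hcardIccn2]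
      exact Nat.mul_le_mul_right _ hcard2
    · rw [Finset.card_product, hcardIccn2]
      exact Nat.mul_le_mul_left _ hcard2
  have hbnd : (zsqGraph.boundarySet (Af : Set (ℤ × ℤ))).ncard ≤ 2*(N+2) + (N+2)*2 + M*M :=
    calc (zsqGraph.boundarySet (Af : Set (ℤ × ℤ))).ncard ≤ (Bf : Set (ℤ × ℤ)).ncard :=
        Set.ncard_le_ncard hbsub Bf.finite_toSet
      _ = Bf.card := Set.ncard_coe_finset _
      _ ≤ _ := hBcard
  exact ⟨(Af : Set (ℤ × ℤ)), Af.finite_toSet, hAne, hbnd, hdepth,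
    by rw [Set.ncard_coe_finset, hcardA]⟩

set_option maxHeartbeats 1600000 in
lemma zsq_final (c : ℝ) (hc : 0 < c) (k M N : ℕ) (hk1 : 1 ≤ k)
    (hM_def : M = 2 * k + 3) (hN_def : N = 2 * k * M) (hck : 8 ≤ c * k) :
    ∃ A : Set (ℤ × ℤ), A.Finite ∧ A.Nonempty ∧
      (((zsqGraph.boundarySet A).ncard : ℝ) * (zsqGraph.depthSet A : ℝ)) < c * (A.ncard : ℝ) := by
  obtain ⟨A, hfin, hne, hbnd, hdepth, hcard⟩ := zsq_construction k M N hk1 hM_def hN_def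
  refine ⟨A, hfin, hne, ?_⟩
  have hMN : M * M ≤ N * N := Nat.mul_le_mul
    (by rw [hN_def]; nlinarith) (by rw [hN_def]; nlinarith)
  have hKr : (1:ℝ) ≤ (k:ℝ) := by exact_mod_cast hk1
  have hMr : (M:ℝ) = 2*(k:ℝ)+3 := by rw [hM_def]; push_cast; ring
  have hNr : (N:ℝ) = 2*(k:ℝ)*(2*(k:ℝ)+3) := by rw [hN_def, hM_def]; push_cast; ring
  have hAncard : ((A.ncard : ℝ)) = (N:ℝ)*(N:ℝ) - (M:ℝ)*(M:ℝ) := by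
    rw [hcard, Nat.cast_sub hMN]
    push_cast
    ring
  have hbnd' : ((zsqGraph.boundarySet A).ncard : ℝ)
      ≤ 2*((N:ℝ)+2) + ((N:ℝ)+2)*2 + (M:ℝ)*(M:ℝ) := by
    calc ((zsqGraph.boundarySet A).ncard : ℝ)
        ≤ ((2*(N+2) + (N+2)*2 + M*M : ℕ) : ℝ) := Nat.cast_le.mpr hbnd
      _ = _ := by push_cast; ring
  have hdepth' : ((zsqGraph.depthSet A : ℕ) : ℝ) ≤ 4*(k:ℝ) := by
    calc ((zsqGraph.depthSet A : ℕ) : ℝ)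
        ≤ ((4*k : ℕ) : ℝ) := Nat.cast_le.mpr hdepth
      _ = 4*(k:ℝ) := by push_cast; ring
  have hprod : ((zsqGraph.boundarySet A).ncard : ℝ) * ((zsqGraph.depthSet A : ℕ) : ℝ)
      ≤ (2*((N:ℝ)+2) + ((N:ℝ)+2)*2 + (M:ℝ)*(M:ℝ)) * (4*(k:ℝ)) := by
    apply mul_le_mul hbnd' hdepth' (by positivity) ?_
    positivity
  set K : ℝ := (k:ℝ) with hK_def
  have key : (2*((N:ℝ)+2) + ((N:ℝ)+2)*2 + (M:ℝ)*(M:ℝ)) * (4*K)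
      < c * ((N:ℝ)*(N:ℝ) - (M:ℝ)*(M:ℝ)) := by
    rw [hMr, hNr]
    have hK2 : (1:ℝ) ≤ K^2 := by nlinarith
    have hK3 : K ≤ K^3 := by nlinarith
    have hK32 : K^2 ≤ K^3 := by nlinarith
    have hP : (16*K^4+20*K^3+8*K^2 : ℝ) ≤ 16*K^4+48*K^3+32*K^2-12*K-9 := by
      nlinarith [hK3, hK32, hK2]
    have h3 : c * (16*K^4+20*K^3+8*K^2) ≤ c * (16*K^4+48*K^3+32*K^2-12*K-9) :=
      mul_le_mul_of_nonneg_left hP hc.le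
    have hck' : 8 ≤ c * K := hck
    have t1 : 16*K^3 * 8 ≤ 16*K^3 * (c*K) :=
      mul_le_mul_of_nonneg_left hck' (by positivity)
    have t2 : 20*K^2 * 8 ≤ 20*K^2 * (c*K) :=
      mul_le_mul_of_nonneg_left hck' (by positivity)
    have t3 : 8*K * 8 ≤ 8*K * (c*K) :=
      mul_le_mul_of_nonneg_left hck' (by positivity)
    have expand : c * (16*K^4+20*K^3+8*K^2) = 16*K^3*(c*K) + 20*K^2*(c*K) + 8*K*(c*K) := by
      ring
    have h4 : 128*K^3+160*K^2+64*K ≤ c * (16*K^4+20*K^3+8*K^2) := by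
      rw [expand]; linarith [t1, t2, t3]
    have h5 : 80*K^3 + 144*K^2 + 68*K < 128*K^3+160*K^2+64*K := by
      nlinarith [hK3, hK32, hKr]
    have e1 : (2*(2*K*(2*K+3)+2) + (2*K*(2*K+3)+2)*2 + (2*K+3)*(2*K+3)) * (4*K)
        = 80*K^3 + 144*K^2 + 68*K := by ring
    have e2 : (2*K*(2*K+3))*(2*K*(2*K+3)) - (2*K+3)*(2*K+3)
        = 16*K^4+48*K^3+32*K^2-12*K-9 := by ring
    rw [e1, e2]
    linarith
  calc ((zsqGraph.boundarySet A).ncard : ℝ) * ((zsqGraph.depthSet A : ℕ) : ℝ)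
      ≤ (2*((N:ℝ)+2) + ((N:ℝ)+2)*2 + (M:ℝ)*(M:ℝ)) * (4*K) := hprod
    _ < c * ((N:ℝ)*(N:ℝ) - (M:ℝ)*(M:ℝ)) := key
    _ = c * ((A.ncard : ℝ)) := by rw [hAncard]


/-- For every real constant `c > 0` there exists a finite nonempty subset `A` of ℤ² such that,
in the Cayley graph of ℤ², `|∂A| ⬝ depth(A) < c ⬝ |A|`. -/
theorem stmt_0 (c : ℝ) (hc : 0 < c) :
    ∃ A : Set (ℤ × ℤ), A.Finite ∧ A.Nonempty ∧
      (((zsqGraph.boundarySet A).ncard : ℝ) * (zsqGraph.depthSet A : ℝ)) < c * (A.ncard : ℝ) := by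
  obtain ⟨k0, hk0⟩ := exists_nat_gt (8 / c)
  refine zsq_final c hc (k0 + 1) (2 * (k0 + 1) + 3) (2 * (k0 + 1) * (2 * (k0 + 1) + 3))
    (Nat.le_add_left 1 k0) rfl rfl ?_
  have h1 : 8 / c < ((k0 + 1 : ℕ) : ℝ) := by push_cast; linarith
  have := (div_lt_iff₀ hc).mp h1
  linarith
end

section
/- For every real constant c > 0 there exist a positive integer n and a subset A of the Cayley graph X of (ℤ/nℤ) × (ℤ/nℤ) with generating set {(±1,0),(0,±1)} such that 0 < |A| ≤ n²/2 and |∂A| · depth(A) < c · |A| (equivalently |∂A|/|A| < c/depth(A)). -/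
/-- The Cayley graph of `(ℤ/nℤ) × (ℤ/nℤ)` with generating set `{(±1,0),(0,±1)}`. -/
def torusGraph (n : ℕ) : SimpleGraph (ZMod n × ZMod n) where
  Adj u v := u ≠ v ∧
    u - v ∈ ({(1, 0), (-1, 0), (0, 1), (0, -1)} : Set (ZMod n × ZMod n))
  symm := by
    constructor
    rintro u v ⟨hne, h⟩
    refine ⟨hne.symm, ?_⟩
    have hvu : v - u = -(u - v) := by ring
    simp only [Set.mem_insert_iff, Set.mem_singleton_iff] at h ⊢
    rcases h with h | h | h | h <;>
      rw [hvu, h] <;> simp [Prod.ext_iff]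
  loopless := by
    constructor
    intro u h
    exact h.1 rfl

lemma torus_adj_left {n : ℕ} (hn : 2 ≤ n) (x y : ZMod n) :
    (torusGraph n).Adj (x, y) (x - 1, y) := by
  haveI : Fact (1 < n) := ⟨hn⟩
  constructor
  · intro h
    rw [Prod.ext_iff] at h
    exact one_ne_zero (sub_eq_self.mp h.1.symm)
  · have h : ((x, y) : ZMod n × ZMod n) - (x - 1, y) = ((1 : ZMod n), (0 : ZMod n)) := by
      have h0 : ((x, y) : ZMod n × ZMod n) - (x - 1, y) = (x - (x - 1), y - y) := rfl
      rw [h0, sub_sub_cancel, sub_self]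
    rw [h]
    simp

lemma torus_adj_down {n : ℕ} (hn : 2 ≤ n) (x y : ZMod n) :
    (torusGraph n).Adj (x, y) (x, y - 1) := by
  haveI : Fact (1 < n) := ⟨hn⟩
  constructor
  · intro h
    rw [Prod.ext_iff] at h
    exact one_ne_zero (sub_eq_self.mp h.2.symm)
  · have h : ((x, y) : ZMod n × ZMod n) - (x, y - 1) = ((0 : ZMod n), (1 : ZMod n)) := by
      have h0 : ((x, y) : ZMod n × ZMod n) - (x, y - 1) = (x - x, y - (y - 1)) := rfl
      rw [h0, sub_sub_cancel, sub_self]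
    rw [h]
    simp

lemma torus_walkY {n : ℕ} (hn : 2 ≤ n) (b : ℕ) (x y : ZMod n) :
    ∃ p : (torusGraph n).Walk (x, y) (x, y - (b : ZMod n)), p.length = b := by
  induction b generalizing y with
  | zero =>
    refine ⟨SimpleGraph.Walk.nil.copy rfl ?_, by simp⟩
    simp
  | succ b ih =>
    obtain ⟨p, hp⟩ := ih (y - 1)
    have he : ((x, (y - 1) - (b : ZMod n)) : ZMod n × ZMod n)
        = (x, y - ((b + 1 : ℕ) : ZMod n)) := by
      rw [Prod.mk.injEq]
      refine ⟨rfl, ?_⟩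
      push_cast
      ring
    exact ⟨(SimpleGraph.Walk.cons (torus_adj_down hn x y) p).copy rfl he, by simp [hp]⟩

lemma torus_walkX {n : ℕ} (hn : 2 ≤ n) (a : ℕ) (x y : ZMod n) :
    ∃ p : (torusGraph n).Walk (x, y) (x - (a : ZMod n), y), p.length = a := by
  induction a generalizing x with
  | zero =>
    refine ⟨SimpleGraph.Walk.nil.copy rfl ?_, by simp⟩
    simp
  | succ a ih =>
    obtain ⟨p, hp⟩ := ih (x - 1)
    have he : (((x - 1) - (a : ZMod n), y) : ZMod n × ZMod n)
        = (x - ((a + 1 : ℕ) : ZMod n), y) := by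
      rw [Prod.mk.injEq]
      refine ⟨?_, rfl⟩
      push_cast
      ring
    exact ⟨(SimpleGraph.Walk.cons (torus_adj_left hn x y) p).copy rfl he, by simp [hp]⟩

lemma torus_dist_le {n : ℕ} (hn : 2 ≤ n) (a b : ℕ) (x y : ZMod n) :
    (torusGraph n).dist (x, y) (x - (a : ZMod n), y - (b : ZMod n)) ≤ a + b := by
  obtain ⟨p, hp⟩ := torus_walkX hn a x y
  obtain ⟨q, hq⟩ := torus_walkY hn b (x - (a : ZMod n)) y
  have h := SimpleGraph.dist_le (p.append q)
  rwa [SimpleGraph.Walk.length_append, hp, hq] at h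

/-- For every real `c > 0` there exist `n ≥ 1` and a set `A` of vertices of the Cayley graph
of `(ℤ/nℤ) × (ℤ/nℤ)` with `0 < |A| ≤ n²/2` and `|∂A| ⬝ depth(A) < c ⬝ |A|`. -/
theorem stmt_1 (c : ℝ) (hc : 0 < c) :
    ∃ n : ℕ, 0 < n ∧ ∃ A : Set (ZMod n × ZMod n),
      0 < A.ncard ∧ 2 * A.ncard ≤ n ^ 2 ∧
      ((((torusGraph n).boundarySet A).ncard : ℝ) * ((torusGraph n).depthSet A : ℝ))
        < c * (A.ncard : ℝ) := by
  obtain ⟨d, hd2, hcd⟩ : ∃ d : ℕ, 2 ≤ d ∧ (12 : ℝ) ≤ c * d := by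
    refine ⟨max 2 ⌈(12 : ℝ) / c⌉₊, le_max_left _ _, ?_⟩
    have h1 : (12 : ℝ) / c ≤ (⌈(12 : ℝ) / c⌉₊ : ℝ) := Nat.le_ceil _
    have h2 : ((⌈(12 : ℝ) / c⌉₊ : ℕ) : ℝ) ≤ ((max 2 ⌈(12 : ℝ) / c⌉₊ : ℕ) : ℝ) :=
      Nat.cast_le.mpr (le_max_right _ _)
    have h3 := h1.trans h2
    rw [div_le_iff₀ hc] at h3
    linarith
  set n := 2 * d ^ 2 with hn
  set m := d ^ 2 with hm
  have hd4 : 4 ≤ m := by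
    calc (4 : ℕ) = 2 * 2 := by norm_num
    _ ≤ d * d := Nat.mul_le_mul hd2 hd2
    _ = m := by rw [hm]; ring
  have hn2 : 2 ≤ n := by omega
  have hmn : m < n := by omega
  haveI : NeZero n := ⟨by omega⟩
  have hvc : ∀ a : ZMod n, ((a.val : ℕ) : ZMod n) = a := fun a => ZMod.natCast_rightInverse a
  refine ⟨n, by omega, ?_⟩
  set S : Set (ZMod n × ZMod n) := {p | p.1.val < m} with hS
  set P : Set (ZMod n × ZMod n) := {p | p.1.val < m ∧ d ∣ p.1.val ∧ d ∣ p.2.val} with hP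
  have hPS : P ⊆ S := fun p hp => hp.1
  -- exact count of S
  have hg : S = (fun q : Fin m × Fin n => (((q.1 : ℕ) : ZMod n), ((q.2 : ℕ) : ZMod n))) '' Set.univ := by
    ext p
    simp only [Set.mem_image, Set.mem_univ, true_and, hS, Set.mem_setOf_eq]
    constructor
    · intro hp
      refine ⟨(⟨p.1.val, hp⟩, ⟨p.2.val, ZMod.val_lt p.2⟩), ?_⟩
      simp only
      rw [hvc p.1, hvc p.2]
    · rintro ⟨q, rfl⟩
      simp only
      rw [ZMod.val_cast_of_lt (lt_trans q.1.isLt hmn)]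
      exact q.1.isLt
  have hginj : Function.Injective
      (fun q : Fin m × Fin n => (((q.1 : ℕ) : ZMod n), ((q.2 : ℕ) : ZMod n))) := by
    rintro ⟨i, j⟩ ⟨i', j'⟩ hq
    simp only [Prod.mk.injEq] at hq
    have h1 : ((i : ℕ) : ZMod n).val = ((i' : ℕ) : ZMod n).val := by rw [hq.1]
    have h2 : ((j : ℕ) : ZMod n).val = ((j' : ℕ) : ZMod n).val := by rw [hq.2]
    rw [ZMod.val_cast_of_lt (lt_trans i.isLt hmn),
      ZMod.val_cast_of_lt (lt_trans i'.isLt hmn)] at h1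
    rw [ZMod.val_cast_of_lt j.isLt, ZMod.val_cast_of_lt j'.isLt] at h2
    simp only [Prod.mk.injEq]
    exact ⟨Fin.ext h1, Fin.ext h2⟩
  have hScard : S.ncard = m * n := by
    rw [hg, Set.ncard_image_of_injective _ hginj, Set.ncard_univ]
    simp [Nat.card_eq_fintype_card]
  -- upper bound for P
  have hPsub : P ⊆ (fun q : Fin d × Fin (2 * d) =>
      (((d * (q.1 : ℕ) : ℕ) : ZMod n), ((d * (q.2 : ℕ) : ℕ) : ZMod n))) '' Set.univ := by
    rintro ⟨px, py⟩ ⟨hx, ⟨i, hi⟩, ⟨j, hj⟩⟩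
    have hi' : i < d := by
      have h1 : d * i < d * d := by
        rw [← hi]
        calc px.val < m := hx
        _ = d * d := by rw [hm]; ring
      exact Nat.lt_of_mul_lt_mul_left h1
    have hj' : j < 2 * d := by
      have h1 : d * j < d * (2 * d) := by
        rw [← hj]
        calc py.val < n := ZMod.val_lt py
        _ = d * (2 * d) := by rw [hn]; ring
      exact Nat.lt_of_mul_lt_mul_left h1
    refine ⟨(⟨i, hi'⟩, ⟨j, hj'⟩), Set.mem_univ _, ?_⟩
    simp only
    rw [← hi, ← hj, hvc px, hvc py]
  have hPcard : P.ncard ≤ 2 * d ^ 2 := by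
    calc P.ncard ≤ _ := Set.ncard_le_ncard hPsub (Set.toFinite _)
    _ ≤ (Set.univ : Set (Fin d × Fin (2 * d))).ncard := Set.ncard_image_le (Set.toFinite _)
    _ = 2 * d ^ 2 := by
      rw [Set.ncard_univ]
      simp [Nat.card_eq_fintype_card]
      ring
  -- cardinality of A
  have hAcard : (S \ P).ncard = m * n - P.ncard := by
    rw [Set.ncard_diff hPS (Set.toFinite _), hScard]
  have hmn4 : m * n = 2 * d ^ 4 := by rw [hm, hn]; ring
  have hmm : 4 * m ≤ m * m := Nat.mul_le_mul hd4 (le_refl m)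
  have h24 : 2 * d ^ 2 < 2 * d ^ 4 := by
    have e1 : d ^ 4 = m * m := by rw [hm]; ring
    have e2 : d ^ 2 = m := hm.symm
    rw [e1, e2]
    linarith
  have hAlow : 2 * d ^ 4 - 2 * d ^ 2 ≤ (S \ P).ncard := by
    rw [hAcard, hmn4]
    exact Nat.sub_le_sub_left hPcard _
  have hApos : 0 < (S \ P).ncard := lt_of_lt_of_le (by omega) hAlow
  have hAup : (S \ P).ncard ≤ 2 * d ^ 4 := by
    rw [← hmn4, ← hScard]
    exact Set.ncard_le_ncard Set.diff_subset (Set.toFinite _)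
  have h2A : 2 * (S \ P).ncard ≤ n ^ 2 := by
    have hnn : n ^ 2 = 4 * d ^ 4 := by rw [hn]; ring
    omega
  refine ⟨S \ P, hApos, h2A, ?_⟩
  -- boundary bound
  have hBsub : (torusGraph n).boundarySet (S \ P) ⊆
      ({p : ZMod n × ZMod n | p.1.val = m} ∪ {p : ZMod n × ZMod n | p.1.val = n - 1}) ∪ P := by
    rintro u ⟨huA, v, hvA, hadj⟩
    obtain ⟨hne, hmem⟩ := hadj
    have hvS : v.1.val < m := hvA.1
    simp only [Set.mem_insert_iff, Set.mem_singleton_iff] at hmem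
    by_cases huP : u ∈ P
    · exact Or.inr huP
    have huS : m ≤ u.1.val := by
      by_contra h
      push_neg at h
      exact huA ⟨h, huP⟩
    left
    rcases hmem with h | h | h | h
    · -- u - v = (1, 0)
      have h1 : u.1 - v.1 = 1 := congrArg Prod.fst h
      have hu1 : u.1 = v.1 + 1 := by linear_combination h1
      have hval : u.1.val = v.1.val + 1 := by
        rw [hu1, ← hvc v.1]
        rw [show ((v.1.val : ℕ) : ZMod n) + 1 = (((v.1.val + 1 : ℕ)) : ZMod n) by push_cast; ring]
        rw [ZMod.val_cast_of_lt (by omega), ZMod.val_cast_of_lt (by omega)]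
      exact Or.inl (by simp only [Set.mem_setOf_eq]; omega)
    · -- u - v = (-1, 0)
      have h1 : u.1 - v.1 = -1 := congrArg Prod.fst h
      have hv1 : v.1 = u.1 + 1 := by linear_combination -h1
      by_cases hcase : u.1.val + 1 < n
      · exfalso
        have hval : v.1.val = u.1.val + 1 := by
          rw [hv1, ← hvc u.1]
          rw [show ((u.1.val : ℕ) : ZMod n) + 1 = (((u.1.val + 1 : ℕ)) : ZMod n) by push_cast; ring]
          rw [ZMod.val_cast_of_lt hcase, ZMod.val_cast_of_lt (by omega)]
        omega
      · have := ZMod.val_lt u.1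
        exact Or.inr (by simp only [Set.mem_setOf_eq]; omega)
    · -- u - v = (0, 1)
      exfalso
      have h1 : u.1 - v.1 = 0 := congrArg Prod.fst h
      have hu1 : u.1 = v.1 := sub_eq_zero.mp h1
      rw [hu1] at huS
      omega
    · -- u - v = (0, -1)
      exfalso
      have h1 : u.1 - v.1 = 0 := congrArg Prod.fst h
      have hu1 : u.1 = v.1 := sub_eq_zero.mp h1
      rw [hu1] at huS
      omega
  have hcol : ∀ k : ℕ, ({p : ZMod n × ZMod n | p.1.val = k}).ncard ≤ n := by
    intro k
    have hsub : {p : ZMod n × ZMod n | p.1.val = k} ⊆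
        (fun y : ZMod n => (((k : ℕ) : ZMod n), y)) '' Set.univ := by
      rintro ⟨px, py⟩ hp
      simp only [Set.mem_setOf_eq] at hp
      refine ⟨py, Set.mem_univ _, ?_⟩
      have hk : ((k : ℕ) : ZMod n) = px := by rw [← hp]; exact hvc px
      rw [hk]
    calc _ ≤ _ := Set.ncard_le_ncard hsub (Set.toFinite _)
    _ ≤ (Set.univ : Set (ZMod n)).ncard := Set.ncard_image_le (Set.toFinite _)
    _ = n := by rw [Set.ncard_univ, Nat.card_zmod]
  have hB : ((torusGraph n).boundarySet (S \ P)).ncard ≤ 6 * d ^ 2 := by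
    calc ((torusGraph n).boundarySet (S \ P)).ncard
        ≤ (({p : ZMod n × ZMod n | p.1.val = m} ∪ {p : ZMod n × ZMod n | p.1.val = n - 1}) ∪ P).ncard :=
          Set.ncard_le_ncard hBsub (Set.toFinite _)
    _ ≤ ({p : ZMod n × ZMod n | p.1.val = m} ∪ {p : ZMod n × ZMod n | p.1.val = n - 1}).ncard + P.ncard :=
          Set.ncard_union_le _ _
    _ ≤ ({p : ZMod n × ZMod n | p.1.val = m}).ncard + ({p : ZMod n × ZMod n | p.1.val = n - 1}).ncard + P.ncard := by
          have := Set.ncard_union_le {p : ZMod n × ZMod n | p.1.val = m} {p : ZMod n × ZMod n | p.1.val = n - 1}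
          omega
    _ ≤ n + n + 2 * d ^ 2 := by
          have h1 := hcol m
          have h2 := hcol (n - 1)
          omega
    _ = 6 * d ^ 2 := by rw [hn]; ring
  -- depth bound
  have hdep : (torusGraph n).depthSet (S \ P) ≤ 2 * d := by
    apply csSup_le'
    rintro z ⟨u, huA, rfl⟩
    obtain ⟨x, y⟩ := u
    show (torusGraph n).distToSet (x, y) (S \ P)ᶜ ≤ 2 * d
    have hx : x.val < m := huA.1
    have hdpos : 0 < d := by omega
    set a := x.val % d with ha
    set b := y.val % d with hb
    have hax : a ≤ x.val := Nat.mod_le _ _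
    have hby : b ≤ y.val := Nat.mod_le _ _
    have hyn : y.val < n := ZMod.val_lt y
    have hp1 : ((x.val - a : ℕ) : ZMod n) = x - (a : ZMod n) := by
      rw [Nat.cast_sub hax, hvc x]
    have hp2 : ((y.val - b : ℕ) : ZMod n) = y - (b : ZMod n) := by
      rw [Nat.cast_sub hby, hvc y]
    have hdvd1 : d ∣ x.val - a := by
      have := Nat.div_add_mod x.val d
      exact ⟨x.val / d, by omega⟩
    have hdvd2 : d ∣ y.val - b := by
      have := Nat.div_add_mod y.val d
      exact ⟨y.val / d, by omega⟩
    have hptP : (x - (a : ZMod n), y - (b : ZMod n)) ∈ P := by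
      refine ⟨?_, ?_, ?_⟩
      · show (x - (a : ZMod n)).val < m
        rw [← hp1, ZMod.val_cast_of_lt (by omega)]
        omega
      · show d ∣ (x - (a : ZMod n)).val
        rw [← hp1, ZMod.val_cast_of_lt (by omega)]
        exact hdvd1
      · show d ∣ (y - (b : ZMod n)).val
        rw [← hp2, ZMod.val_cast_of_lt (by omega)]
        exact hdvd2
    have hptC : (x - (a : ZMod n), y - (b : ZMod n)) ∈ (S \ P)ᶜ := fun hmem => hmem.2 hptP
    have hle : (torusGraph n).distToSet (x, y) (S \ P)ᶜ
        ≤ (torusGraph n).dist (x, y) (x - (a : ZMod n), y - (b : ZMod n)) :=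
      Nat.sInf_le ⟨_, hptC, rfl⟩
    have hdist := torus_dist_le hn2 a b x y
    have haa : a < d := Nat.mod_lt _ hdpos
    have hbb : b < d := Nat.mod_lt _ hdpos
    omega
  -- final arithmetic
  have hcast1 : ((((torusGraph n).boundarySet (S \ P)).ncard : ℕ) : ℝ) ≤ 6 * (d : ℝ) ^ 2 := by
    exact_mod_cast hB
  have hcast2 : (((torusGraph n).depthSet (S \ P) : ℕ) : ℝ) ≤ 2 * (d : ℝ) := by
    exact_mod_cast hdep
  have hdR : (2 : ℝ) ≤ (d : ℝ) := by exact_mod_cast hd2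
  have hA' : 2 * (d : ℝ) ^ 4 - 2 * (d : ℝ) ^ 2 ≤ ((S \ P).ncard : ℝ) := by
    calc 2 * (d : ℝ) ^ 4 - 2 * (d : ℝ) ^ 2 = ((2 * d ^ 4 - 2 * d ^ 2 : ℕ) : ℝ) := by
          rw [Nat.cast_sub (by omega)]
          push_cast
          ring
    _ ≤ _ := Nat.cast_le.mpr hAlow
  calc ((((torusGraph n).boundarySet (S \ P)).ncard : ℕ) : ℝ) * (((torusGraph n).depthSet (S \ P) : ℕ) : ℝ)
      ≤ (6 * (d : ℝ) ^ 2) * (2 * (d : ℝ)) := by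
        apply mul_le_mul hcast1 hcast2 (by positivity) (by positivity)
  _ = 12 * (d : ℝ) ^ 3 := by ring
  _ < c * (2 * (d : ℝ) ^ 4 - 2 * (d : ℝ) ^ 2) := by
        have h0 : (0 : ℝ) ≤ (d : ℝ) ^ 3 - (d : ℝ) := by nlinarith
        have h1 : (12 : ℝ) * ((d : ℝ) ^ 3 - (d : ℝ)) ≤ (c * (d : ℝ)) * ((d : ℝ) ^ 3 - (d : ℝ)) :=
          mul_le_mul_of_nonneg_right hcd h0
        nlinarith [h1, hdR, mul_le_mul_of_nonneg_right hdR (by positivity : (0 : ℝ) ≤ (d : ℝ) ^ 2)]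
  _ ≤ c * ((S \ P).ncard : ℝ) := mul_le_mul_of_nonneg_left hA' hc.le
end

section
/- For all integers i, k > 1, the boundary of A_i(k) in the Cayley graph of ℤ² satisfies |∂A_i(k)| = (k−1)² + 4(ki+1). -/
/-- The square grid `X_i(k) = {(m,n) : 0 ≤ m ≤ ki, 0 ≤ n ≤ ki}`. -/
def Xik (i k : ℤ) : Set (ℤ × ℤ) :=
  {p | 0 ≤ p.1 ∧ p.1 ≤ k * i ∧ 0 ≤ p.2 ∧ p.2 ≤ k * i}

/-- The lattice of removed points `Y_i(k) = {(mi, ni) : 1 ≤ m ≤ k-1, 1 ≤ n ≤ k-1}`. -/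
def Yik (i k : ℤ) : Set (ℤ × ℤ) :=
  {p | ∃ m n : ℤ, 1 ≤ m ∧ m ≤ k - 1 ∧ 1 ≤ n ∧ n ≤ k - 1 ∧ p = (m * i, n * i)}

/-- The set `A_i(k) = X_i(k) \ Y_i(k)`. -/
def Aik (i k : ℤ) : Set (ℤ × ℤ) := Xik i k \ Yik i k

section Aux

variable (i k : ℤ)

/-- The explicit description of the boundary as a Finset. -/
noncomputable def bdFinset : Finset (ℤ × ℤ) :=
  ((Finset.Icc (0:ℤ) (k*i)).image (fun m => (m, (-1:ℤ))) ∪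
   (Finset.Icc (0:ℤ) (k*i)).image (fun m => (m, k*i+1)) ∪
   (Finset.Icc (0:ℤ) (k*i)).image (fun n => ((-1:ℤ), n)) ∪
   (Finset.Icc (0:ℤ) (k*i)).image (fun n => (k*i+1, n))) ∪
  ((Finset.Icc (1:ℤ) (k-1)) ×ˢ (Finset.Icc (1:ℤ) (k-1))).image
    (fun p => (p.1 * i, p.2 * i))

lemma mem_bdFinset (hi : 1 < i) (hk : 1 < k) (p : ℤ × ℤ) :
    p ∈ bdFinset i k ↔
      (0 ≤ p.1 ∧ p.1 ≤ k*i ∧ (p.2 = -1 ∨ p.2 = k*i+1)) ∨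
      ((p.1 = -1 ∨ p.1 = k*i+1) ∧ 0 ≤ p.2 ∧ p.2 ≤ k*i) ∨
      (∃ a b : ℤ, 1 ≤ a ∧ a ≤ k-1 ∧ 1 ≤ b ∧ b ≤ k-1 ∧ p = (a*i, b*i)) := by
  obtain ⟨x, y⟩ := p
  simp only [bdFinset, Finset.mem_union, Finset.mem_image, Finset.mem_Icc,
    Finset.mem_product, Prod.ext_iff, Prod.exists]
  constructor
  · rintro ((((⟨m, hm, h1, h2⟩ | ⟨m, hm, h1, h2⟩) | ⟨m, hm, h1, h2⟩) | ⟨m, hm, h1, h2⟩) |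
      ⟨a, b, hab, h1, h2⟩)
    · exact Or.inl ⟨by omega, by omega, Or.inl h2.symm⟩
    · exact Or.inl ⟨by omega, by omega, Or.inr h2.symm⟩
    · exact Or.inr (Or.inl ⟨Or.inl h1.symm, by omega, by omega⟩)
    · exact Or.inr (Or.inl ⟨Or.inr h1.symm, by omega, by omega⟩)
    · exact Or.inr (Or.inr ⟨a, b, hab.1.1, hab.1.2, hab.2.1, hab.2.2, h1.symm, h2.symm⟩)
  · rintro (⟨h1, h2, (h3 | h3)⟩ | ⟨(h1 | h1), h2, h3⟩ | ⟨a, b, ha1, ha2, hb1, hb2, h1, h2⟩)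
    · exact Or.inl (Or.inl (Or.inl (Or.inl ⟨x, ⟨h1, h2⟩, rfl, h3.symm⟩)))
    · exact Or.inl (Or.inl (Or.inl (Or.inr ⟨x, ⟨h1, h2⟩, rfl, h3.symm⟩)))
    · exact Or.inl (Or.inl (Or.inr ⟨y, ⟨h2, h3⟩, h1.symm, rfl⟩))
    · exact Or.inl (Or.inr ⟨y, ⟨h2, h3⟩, h1.symm, rfl⟩)
    · exact Or.inr ⟨a, b, ⟨⟨ha1, ha2⟩, hb1, hb2⟩, h1.symm, h2.symm⟩

lemma bd_eq (hi : 1 < i) (hk : 1 < k) :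
    zsqGraph.boundarySet (Aik i k) = ↑(bdFinset i k) := by
  have hi0 : (0:ℤ) < i := by omega
  ext ⟨x, y⟩
  simp only [SimpleGraph.boundarySet, Set.mem_setOf_eq, Finset.coe_sort_coe,
    Finset.mem_coe, mem_bdFinset i k hi hk]
  constructor
  · rintro ⟨hnA, ⟨v1, v2⟩, hvA, hadj⟩
    have hadj' : |x - v1| + |y - v2| = 1 := hadj
    have hstep : (x - v1 = 1 ∧ y = v2) ∨ (x - v1 = -1 ∧ y = v2) ∨
        (x = v1 ∧ y - v2 = 1) ∨ (x = v1 ∧ y - v2 = -1) := by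
      rcases abs_cases (x - v1) with ⟨h1, h1'⟩ | ⟨h1, h1'⟩ <;>
        rcases abs_cases (y - v2) with ⟨h2, h2'⟩ | ⟨h2, h2'⟩ <;>
          rw [h1, h2] at hadj' <;> omega
    obtain ⟨hvX, hvY⟩ := hvA
    simp only [Xik, Set.mem_setOf_eq] at hvX
    obtain ⟨hv1, hv2, hv3, hv4⟩ := hvX
    by_cases hY : (x, y) ∈ Yik i k
    · obtain ⟨a, b, ha1, ha2, hb1, hb2, hab⟩ := hY
      exact Or.inr (Or.inr ⟨a, b, ha1, ha2, hb1, hb2, hab⟩)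
    · have hnX : (x, y) ∉ Xik i k := fun hX => hnA ⟨hX, hY⟩
      simp only [Xik, Set.mem_setOf_eq, not_and, not_le] at hnX
      have : (0 ≤ x ∧ x ≤ k*i ∧ (y = -1 ∨ y = k*i+1)) ∨
          ((x = -1 ∨ x = k*i+1) ∧ 0 ≤ y ∧ y ≤ k*i) := by omega
      exact this.imp id Or.inl
  · have hYA : ∀ q : ℤ × ℤ, q ∈ Yik i k → q ∉ Aik i k := fun q hq hA => hA.2 hq
    have hnotY0 : ∀ m : ℤ, ((m:ℤ), (0:ℤ)) ∉ Yik i k := by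
      rintro m ⟨a, b, ha1, ha2, hb1, hb2, hab⟩
      have hb : 0 < b * i := mul_pos (by omega) hi0
      simp only [Prod.mk.injEq] at hab
      omega
    have hnotYN : ∀ m : ℤ, ((m:ℤ), k*i) ∉ Yik i k := by
      rintro m ⟨a, b, ha1, ha2, hb1, hb2, hab⟩
      simp only [Prod.mk.injEq] at hab
      have hbk : b = k := mul_right_cancel₀ (by omega : i ≠ 0) hab.2.symm
      omega
    have hnotX0 : ∀ m : ℤ, ((0:ℤ), (m:ℤ)) ∉ Yik i k := by
      rintro m ⟨a, b, ha1, ha2, hb1, hb2, hab⟩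
      have ha : 0 < a * i := mul_pos (by omega) hi0
      simp only [Prod.mk.injEq] at hab
      omega
    have hnotXN : ∀ m : ℤ, (k*i, (m:ℤ)) ∉ Yik i k := by
      rintro m ⟨a, b, ha1, ha2, hb1, hb2, hab⟩
      simp only [Prod.mk.injEq] at hab
      have hak : a = k := mul_right_cancel₀ (by omega : i ≠ 0) hab.1.symm
      omega
    rintro (⟨h1, h2, (h3 | h3)⟩ | ⟨(h1 | h1), h2, h3⟩ | ⟨a, b, ha1, ha2, hb1, hb2, hab⟩)
    · subst h3
      refine ⟨fun hA => by simpa using hA.1.2.2.1, (x, 0), ⟨⟨h1, h2, le_refl 0, by omega⟩, hnotY0 x⟩, ?_⟩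
      show |x - x| + |(-1 : ℤ) - 0| = 1
      simp
    · subst h3
      refine ⟨fun hA => by simpa using hA.1.2.2.2, (x, k*i), ⟨⟨h1, h2, by omega, le_refl _⟩, hnotYN x⟩, ?_⟩
      show |x - x| + |(k*i+1 : ℤ) - (k*i)| = 1
      simp
    · subst h1
      refine ⟨fun hA => by simpa using hA.1.1, (0, y), ⟨⟨le_refl 0, by omega, h2, h3⟩, hnotX0 y⟩, ?_⟩
      show |(-1 : ℤ) - 0| + |y - y| = 1
      simp
    · subst h1
      refine ⟨fun hA => by simpa using hA.1.2.1, (k*i, y), ⟨⟨by omega, le_refl _, h2, h3⟩, hnotXN y⟩, ?_⟩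
      show |(k*i+1 : ℤ) - (k*i)| + |y - y| = 1
      simp
    · simp only [Prod.mk.injEq] at hab
      obtain ⟨rfl, rfl⟩ := hab
      have hY : ((a*i, b*i) : ℤ × ℤ) ∈ Yik i k := ⟨a, b, ha1, ha2, hb1, hb2, rfl⟩
      have hai : i ≤ a * i := le_mul_of_one_le_left hi0.le ha1
      have hai2 : a * i ≤ (k-1) * i := mul_le_mul_of_nonneg_right ha2 hi0.le
      have hbi : i ≤ b * i := le_mul_of_one_le_left hi0.le hb1
      have hbi2 : b * i ≤ (k-1) * i := mul_le_mul_of_nonneg_right hb2 hi0.le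
      have hki : (k-1) * i = k * i - i := by ring
      refine ⟨hYA _ hY, (a*i + 1, b*i), ⟨⟨by omega, by omega, by omega, by omega⟩, ?_⟩, ?_⟩
      · rintro ⟨a', b', ha1', ha2', hb1', hb2', hab'⟩
        simp only [Prod.mk.injEq] at hab'
        have hsub : (a' - a) * i = a' * i - a * i := by ring
        have h1 : (a' - a) * i = 1 := by omega
        have hdvd : i ∣ 1 := ⟨a' - a, by rw [← h1]; ring⟩
        have := Int.le_of_dvd one_pos hdvd
        omega
      · show |(a*i : ℤ) - (a*i + 1)| + |b*i - b*i| = 1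
        simp

end Aux
/-- For all integers `i, k > 1`, `|∂A_i(k)| = (k−1)² + 4(ki+1)` in the Cayley graph of ℤ². -/
theorem stmt_3 (i k : ℤ) (hi : 1 < i) (hk : 1 < k) :
    (((zsqGraph.boundarySet (Aik i k)).ncard : ℤ)) = (k - 1) ^ 2 + 4 * (k * i + 1) := by
  have hi0 : (0:ℤ) < i := by omega
  have hN : (4:ℤ) ≤ k * i := by nlinarith
  rw [bd_eq i k hi hk, Set.ncard_coe_finset]
  set N := k * i with hNdef
  set F1 := (Finset.Icc (0:ℤ) N).image (fun m => (m, (-1:ℤ))) with hF1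
  set F2 := (Finset.Icc (0:ℤ) N).image (fun m => (m, N+1)) with hF2
  set F3 := (Finset.Icc (0:ℤ) N).image (fun n => ((-1:ℤ), n)) with hF3
  set F4 := (Finset.Icc (0:ℤ) N).image (fun n => (N+1, n)) with hF4
  set YF := ((Finset.Icc (1:ℤ) (k-1)) ×ˢ (Finset.Icc (1:ℤ) (k-1))).image
    (fun p => (p.1 * i, p.2 * i)) with hYF
  have hbd : bdFinset i k = F1 ∪ F2 ∪ F3 ∪ F4 ∪ YF := rfl
  -- bounds for YF coordinates
  have hYFmem : ∀ p ∈ YF, 2 ≤ p.1 ∧ p.1 ≤ N - 2 ∧ 2 ≤ p.2 ∧ p.2 ≤ N - 2 := by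
    rintro p hp
    simp only [hYF, Finset.mem_image, Finset.mem_product, Finset.mem_Icc, Prod.exists] at hp
    obtain ⟨a, b, ⟨⟨ha1, ha2⟩, hb1, hb2⟩, rfl⟩ := hp
    have hai : i ≤ a * i := le_mul_of_one_le_left hi0.le ha1
    have hai2 : a * i ≤ (k-1) * i := mul_le_mul_of_nonneg_right ha2 hi0.le
    have hbi : i ≤ b * i := le_mul_of_one_le_left hi0.le hb1
    have hbi2 : b * i ≤ (k-1) * i := mul_le_mul_of_nonneg_right hb2 hi0.le
    have hki : (k-1) * i = N - i := by rw [hNdef]; ring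
    dsimp only
    omega
  have d12 : Disjoint F1 F2 := by
    simp only [Finset.disjoint_left, hF1, hF2, Finset.mem_image, Finset.mem_Icc]
    rintro a ⟨m, hm, rfl⟩ ⟨m', hm', h⟩
    simp only [Prod.mk.injEq] at h
    omega
  have d3 : Disjoint (F1 ∪ F2) F3 := by
    simp only [Finset.disjoint_left, hF1, hF2, hF3, Finset.mem_union, Finset.mem_image,
      Finset.mem_Icc]
    rintro a (⟨m, hm, rfl⟩ | ⟨m, hm, rfl⟩) ⟨m', hm', h⟩ <;>
      · simp only [Prod.mk.injEq] at h
        omega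
  have d4 : Disjoint (F1 ∪ F2 ∪ F3) F4 := by
    simp only [Finset.disjoint_left, hF1, hF2, hF3, hF4, Finset.mem_union, Finset.mem_image,
      Finset.mem_Icc]
    rintro a ((⟨m, hm, rfl⟩ | ⟨m, hm, rfl⟩) | ⟨m, hm, rfl⟩) ⟨m', hm', h⟩ <;>
      · simp only [Prod.mk.injEq] at h
        omega
  have d5 : Disjoint (F1 ∪ F2 ∪ F3 ∪ F4) YF := by
    rw [Finset.disjoint_right]
    intro p hp hmem
    have hb := hYFmem p hp
    simp only [hF1, hF2, hF3, hF4, Finset.mem_union, Finset.mem_image, Finset.mem_Icc] at hmem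
    rcases hmem with (((⟨m, hm, h⟩ | ⟨m, hm, h⟩) | ⟨m, hm, h⟩) | ⟨m, hm, h⟩) <;>
      · rw [← h] at hb
        dsimp only at hb
        omega
  have cIcc : (Finset.Icc (0:ℤ) N).card = (N+1).toNat := by
    rw [Int.card_Icc]; congr 1; omega
  have c1 : F1.card = (N+1).toNat := by
    rw [hF1, Finset.card_image_of_injective _ (fun a b h => (Prod.ext_iff.mp h).1), cIcc]
  have c2 : F2.card = (N+1).toNat := by
    rw [hF2, Finset.card_image_of_injective _ (fun a b h => (Prod.ext_iff.mp h).1), cIcc]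
  have c3 : F3.card = (N+1).toNat := by
    rw [hF3, Finset.card_image_of_injective _ (fun a b h => (Prod.ext_iff.mp h).2), cIcc]
  have c4 : F4.card = (N+1).toNat := by
    rw [hF4, Finset.card_image_of_injective _ (fun a b h => (Prod.ext_iff.mp h).2), cIcc]
  have cY : YF.card = (k-1).toNat * (k-1).toNat := by
    rw [hYF, Finset.card_image_of_injective, Finset.card_product, Int.card_Icc]
    · congr 1 <;> · congr 1; omega
    · rintro ⟨a, b⟩ ⟨a', b'⟩ h
      simp only [Prod.mk.injEq] at h
      obtain ⟨h1, h2⟩ := h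
      have ha : a = a' := mul_right_cancel₀ (by omega : i ≠ 0) h1
      have hb : b = b' := mul_right_cancel₀ (by omega : i ≠ 0) h2
      simp [ha, hb]
  rw [hbd, Finset.card_union_of_disjoint d5, Finset.card_union_of_disjoint d4,
    Finset.card_union_of_disjoint d3, Finset.card_union_of_disjoint d12,
    c1, c2, c3, c4, cY]
  push_cast
  rw [Int.toNat_of_nonneg (by omega : (0:ℤ) ≤ N + 1), Int.toNat_of_nonneg (by omega : (0:ℤ) ≤ k - 1)]
  ring
end

section
/- Let G be a group generated by a finite set S, and let X be the Cayley graph of G with respect to S. Assume that for every natural number n the ball of radius n in the word metric satisfies b(n) ≥ (n+1)(n+2)/2. Then every finite nonempty subset A of the vertices of X satisfies |A| ≤ 16 |∂A|². -/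
section Aux

variable {G : Type*} [Group G] {S : Set G}

lemma gen_inv_mem {s : G} (h : s ∈ S ∪ S⁻¹) : s⁻¹ ∈ S ∪ S⁻¹ := by
  rcases h with h | h
  · exact Or.inr (Set.inv_mem_inv.mpr h)
  · exact Or.inl (by simpa using h)

/-- Left multiplication is a graph automorphism of the Cayley graph. -/
def cayleyMulIso (S : Set G) (g : G) : cayleyGraph S ≃g cayleyGraph S where
  toEquiv := Equiv.mulLeft g
  map_rel_iff' := by
    intro x y
    show (cayleyGraph S).Adj (g * x) (g * y) ↔ (cayleyGraph S).Adj x y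
    unfold cayleyGraph
    simp only [ne_eq, mul_right_inj, mul_inv_rev]
    constructor
    · rintro ⟨h1, h2⟩
      refine ⟨h1, ?_⟩
      have : x⁻¹ * g⁻¹ * (g * y) = x⁻¹ * y := by group
      rwa [this] at h2
    · rintro ⟨h1, h2⟩
      refine ⟨h1, ?_⟩
      have : x⁻¹ * g⁻¹ * (g * y) = x⁻¹ * y := by group
      rwa [this]

lemma reachable_mul {g x y : G} (h : (cayleyGraph S).Reachable x y) :
    (cayleyGraph S).Reachable (g * x) (g * y) := by
  obtain ⟨p⟩ := h
  exact ⟨(p.map (cayleyMulIso S g).toHom).copy rfl rfl⟩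

lemma cayley_reachable (hgen : Subgroup.closure S = ⊤) (x : G) :
    (cayleyGraph S).Reachable 1 x := by
  have hx : x ∈ Subgroup.closure S := hgen ▸ Subgroup.mem_top x
  induction hx using Subgroup.closure_induction with
  | mem s hs =>
      by_cases h1 : s = 1
      · subst h1; exact SimpleGraph.Reachable.refl 1
      · exact SimpleGraph.Adj.reachable ⟨fun h => h1 h.symm, by simpa using Or.inl hs⟩
  | one => exact SimpleGraph.Reachable.refl 1
  | mul a b _ _ ha hb =>
      exact ha.trans (by simpa using reachable_mul (g := a) hb)
  | inv a _ ha =>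
      have := reachable_mul (g := a⁻¹) ha
      simpa using this.symm

/-- A walk in the Cayley graph gives a word in the generators. -/
lemma walk_to_list {x y : G} (p : (cayleyGraph S).Walk x y) :
    ∃ l : List G, l.length = p.length ∧ (∀ s ∈ l, s ∈ S ∪ S⁻¹) ∧ x * l.prod = y := by
  induction p with
  | nil => exact ⟨[], by simp⟩
  | @cons u v w h q ih =>
      obtain ⟨l, hl, hmem, hprod⟩ := ih
      refine ⟨(u⁻¹ * v) :: l, by simp [hl], ?_, ?_⟩
      · intro s hs
        rcases List.mem_cons.mp hs with rfl | hs
        · exact h.2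
        · exact hmem s hs
      · rw [List.prod_cons, ← mul_assoc]
        simpa using hprod

lemma ball_finite (hS : S.Finite) (hgen : Subgroup.closure S = ⊤) (n : ℕ) :
    {x : G | (cayleyGraph S).dist 1 x ≤ n}.Finite := by
  have hT : (S ∪ S⁻¹).Finite := hS.union hS.inv
  haveI := hT.to_subtype
  have hfin : {l : List ↥(S ∪ S⁻¹) | l.length ≤ n}.Finite := List.finite_length_le _ n
  apply (hfin.image (fun l : List ↥(S ∪ S⁻¹) => (l.map Subtype.val).prod)).subset
  intro x hx
  obtain ⟨p, hp⟩ := (cayley_reachable hgen x).exists_walk_length_eq_dist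
  obtain ⟨l, hl, hmem, hprod⟩ := walk_to_list p
  refine ⟨l.attach.map (fun a => ⟨a.1, hmem a.1 a.2⟩), ?_, ?_⟩
  · simp only [Set.mem_setOf_eq, List.length_map, List.length_attach]
    rw [hl, hp]; exact hx
  · have hmap : ((l.attach.map (fun a => (⟨a.1, hmem a.1 a.2⟩ : ↥(S ∪ S⁻¹)))).map Subtype.val) = l := by
      simp
    show (List.map Subtype.val _).prod = x
    rw [hmap]
    simpa using hprod

lemma boundary_finite (hS : S.Finite) {A : Set G} (hA : A.Finite) :
    ((cayleyGraph S).boundarySet A).Finite := by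
  have hT : (S ∪ S⁻¹).Finite := hS.union hS.inv
  apply (hA.image2 (· * ·) hT).subset
  rintro u ⟨hu, v, hv, hadj⟩
  refine ⟨v, hv, v⁻¹ * u, ?_, by group⟩
  have h2 := gen_inv_mem hadj.2
  rwa [mul_inv_rev, inv_inv] at h2

lemma crossing (hS : S.Finite) {A : Set G} (hA : A.Finite) :
    ∀ l : List G, (∀ s ∈ l, s ∈ S ∪ S⁻¹) →
      {a | a ∈ A ∧ a * l.prod ∉ A}.ncard
        ≤ l.length * ((cayleyGraph S).boundarySet A).ncard := by
  intro l
  induction l with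
  | nil =>
      intro _
      have : {a | a ∈ A ∧ a * ([] : List G).prod ∉ A} = ∅ := by
        ext a; simp
      rw [this]; simp
  | cons s t ih =>
      intro hmem
      have hs : s ∈ S ∪ S⁻¹ := hmem s List.mem_cons_self
      have ht := ih (fun x hx => hmem x (List.mem_cons_of_mem _ hx))
      have hBd := boundary_finite hS hA
      have fin1 : ({a | a ∈ A ∧ a * t.prod ∉ A} : Set G).Finite :=
        hA.subset (fun a ha => ha.1)
      have hsub : {a | a ∈ A ∧ a * (s :: t).prod ∉ A} ⊆
          (fun b => b * s⁻¹) ''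
            ({a | a ∈ A ∧ a * t.prod ∉ A} ∪ (cayleyGraph S).boundarySet A) := by
        rintro a ⟨ha, hna⟩
        rw [List.prod_cons] at hna
        by_cases hb : a * s ∈ A
        · exact ⟨a * s, Or.inl ⟨hb, by rwa [← mul_assoc] at hna⟩, by group⟩
        · refine ⟨a * s, Or.inr ⟨hb, a, ha, ?_, ?_⟩, by group⟩
          · intro h; exact hb (by rw [h]; exact ha)
          · show (a * s)⁻¹ * a ∈ S ∪ S⁻¹
            have he : (a * s)⁻¹ * a = s⁻¹ := by group
            rw [he]; exact gen_inv_mem hs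
      calc {a | a ∈ A ∧ a * (s :: t).prod ∉ A}.ncard
          ≤ ((fun b => b * s⁻¹) ''
              ({a | a ∈ A ∧ a * t.prod ∉ A} ∪ (cayleyGraph S).boundarySet A)).ncard :=
            Set.ncard_le_ncard hsub ((fin1.union hBd).image _)
        _ = ({a | a ∈ A ∧ a * t.prod ∉ A} ∪ (cayleyGraph S).boundarySet A).ncard :=
            Set.ncard_image_of_injective _ (mul_left_injective s⁻¹)
        _ ≤ {a | a ∈ A ∧ a * t.prod ∉ A}.ncard + ((cayleyGraph S).boundarySet A).ncard :=
            Set.ncard_union_le _ _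
        _ ≤ t.length * ((cayleyGraph S).boundarySet A).ncard
              + ((cayleyGraph S).boundarySet A).ncard := Nat.add_le_add_right ht _
        _ = (s :: t).length * ((cayleyGraph S).boundarySet A).ncard := by
            rw [List.length_cons]; ring

end Aux

/-- If the Cayley graph of a finitely generated group has at least quadratic growth,
`b(n) ≥ (n+1)(n+2)/2`, then every finite nonempty set `A` of vertices satisfies
`|A| ≤ 16 |∂A|²`. -/
theorem stmt_7 {G : Type*} [Group G] (S : Set G) (hS : S.Finite)
    (hgen : Subgroup.closure S = ⊤)
    (hb : ∀ n : ℕ, (n + 1) * (n + 2) ≤ 2 * ballCard S n)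
    (A : Set G) (hA : A.Finite) (hne : A.Nonempty) :
    A.ncard ≤ 16 * ((cayleyGraph S).boundarySet A).ncard ^ 2 := by
  classical
  set m := ((cayleyGraph S).boundarySet A).ncard with hm
  set N := A.ncard with hN
  have hNpos : 0 < N := (Set.ncard_pos hA).mpr hne
  -- there is a radius whose ball has at least 2N vertices
  have hex : ∃ n : ℕ, 2 * N ≤ ballCard S n := by
    refine ⟨2 * N, ?_⟩
    have h1 := hb (2 * N)
    nlinarith [h1]
  set n := Nat.find hex with hn
  have hnspec : 2 * N ≤ ballCard S n := Nat.find_spec hex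
  have hball0 : ballCard S 0 = 1 := by
    have h01 : {x : G | (cayleyGraph S).dist 1 x ≤ 0} = {1} := by
      ext x
      simp only [Set.mem_setOf_eq, Nat.le_zero, Set.mem_singleton_iff]
      constructor
      · intro h
        rcases SimpleGraph.dist_eq_zero_iff_eq_or_not_reachable.mp h with h | h
        · exact h.symm
        · exact absurd (cayley_reachable hgen x) h
      · rintro rfl; simp
    unfold ballCard
    rw [h01]
    exact Set.ncard_singleton 1
  have hn1 : 1 ≤ n := by
    rcases Nat.eq_zero_or_pos n with h0 | h
    · exfalso; have h2 := hnspec; rw [h0, hball0] at h2; omega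
    · exact h
  obtain ⟨k, hk⟩ : ∃ k, n = k + 1 := ⟨n - 1, by omega⟩
  have hprev : ballCard S k < 2 * N := by
    have h3 := Nat.find_min hex (m := k) (by omega)
    omega
  have hquad : (k + 1) * (k + 2) + 2 ≤ 4 * N := by
    have h4 := hb k
    omega
  -- finsets
  have hBfin := ball_finite hS hgen n
  set BF := hBfin.toFinset with hBF
  have hBcard : BF.card = ballCard S n :=
    (Set.ncard_eq_toFinset_card _ hBfin).symm
  set AF := hA.toFinset with hAF
  have hAcard : AF.card = N :=
    (Set.ncard_eq_toFinset_card _ hA).symm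
  set f : G → ℕ := fun g => (AF.filter (fun a => a * g ∈ A)).card with hf
  -- double counting
  have hsum : ∑ g ∈ BF, f g ≤ N * N := by
    have hswap : ∑ g ∈ BF, f g = ∑ a ∈ AF, (BF.filter (fun g => a * g ∈ A)).card := by
      simp only [hf, Finset.card_filter]
      exact Finset.sum_comm
    rw [hswap]
    have hinner : ∀ a ∈ AF, (BF.filter (fun g => a * g ∈ A)).card ≤ N := by
      intro a _
      rw [← hAcard]
      apply Finset.card_le_card_of_injOn (fun g => a * g)
      · intro g hg
        rw [hAF, Finset.mem_coe, hA.mem_toFinset]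
        exact (Finset.mem_filter.mp (Finset.mem_coe.mp hg)).2
      · intro g _ g' _ h
        exact mul_left_cancel h
    calc ∑ a ∈ AF, (BF.filter (fun g => a * g ∈ A)).card
        ≤ ∑ _a ∈ AF, N := Finset.sum_le_sum hinner
      _ = N * N := by rw [Finset.sum_const, smul_eq_mul, hAcard]
  -- choose the translate with minimal intersection
  have hBne : BF.Nonempty := by
    refine ⟨1, ?_⟩
    rw [hBF, hBfin.mem_toFinset]
    show (cayleyGraph S).dist 1 1 ≤ n
    simp [SimpleGraph.dist_self]
  obtain ⟨g₀, hg₀B, hg₀min⟩ := BF.exists_min_image f hBne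
  have h2f : 2 * f g₀ ≤ N := by
    have h1 : BF.card * f g₀ ≤ ∑ g ∈ BF, f g := by
      have h5 := Finset.card_nsmul_le_sum BF f (f g₀) (fun x hx => hg₀min x hx)
      simpa [smul_eq_mul] using h5
    have h2 : 2 * N * f g₀ ≤ N * N := by
      calc 2 * N * f g₀ ≤ BF.card * f g₀ :=
            Nat.mul_le_mul_right _ (by omega)
        _ ≤ ∑ g ∈ BF, f g := h1
        _ ≤ N * N := hsum
    have h3 : N * (2 * f g₀) ≤ N * N := by
      calc N * (2 * f g₀) = 2 * N * f g₀ := by ring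
        _ ≤ N * N := h2
    exact Nat.le_of_mul_le_mul_left h3 hNpos
  -- the displaced part
  have hDcard : {a | a ∈ A ∧ a * g₀ ∉ A}.ncard
      = (AF.filter (fun a => a * g₀ ∉ A)).card := by
    have hDset : {a | a ∈ A ∧ a * g₀ ∉ A}
        = ↑(AF.filter (fun a => a * g₀ ∉ A)) := by
      ext a
      simp [hAF, hA.mem_toFinset]
    rw [hDset, Set.ncard_coe_finset]
  have hsplit : f g₀ + (AF.filter (fun a => a * g₀ ∉ A)).card = N := by
    rw [← hAcard, hf]
    exact Finset.card_filter_add_card_filter_not _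
  -- the displaced part is controlled by the boundary
  have hdist : (cayleyGraph S).dist 1 g₀ ≤ n := by
    have h6 := hBfin.mem_toFinset.mp (hBF ▸ hg₀B)
    exact h6
  obtain ⟨p, hp⟩ := (cayley_reachable hgen g₀).exists_walk_length_eq_dist
  obtain ⟨l, hl, hmeml, hprodl⟩ := walk_to_list p
  have hllen : l.length ≤ n := by rw [hl, hp]; exact hdist
  have hcross := crossing hS hA l hmeml
  rw [show l.prod = g₀ from by simpa using hprodl] at hcross
  have hD : {a | a ∈ A ∧ a * g₀ ∉ A}.ncard ≤ n * m :=
    le_trans hcross (Nat.mul_le_mul_right _ hllen)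
  have hNle : N ≤ 2 * (n * m) := by
    rw [hDcard] at hD
    omega
  -- final arithmetic
  rw [hk] at hNle
  have h8 : (k + 1) * (k + 2) < (k + 1) * (8 * m) := by
    have h9 : (k + 1) * (8 * m) = 4 * (2 * ((k + 1) * m)) := by ring
    have h10 : 4 * N ≤ 4 * (2 * ((k + 1) * m)) := by omega
    omega
  have hkm : k + 2 ≤ 8 * m := le_of_lt (Nat.lt_of_mul_lt_mul_left h8)
  calc A.ncard = N := hN
    _ ≤ 2 * ((k + 1) * m) := hNle
    _ ≤ 2 * ((8 * m) * m) :=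
        Nat.mul_le_mul_left _ (Nat.mul_le_mul_right _ (by omega))
    _ = 16 * m ^ 2 := by ring
end

section
/- Let G be a group generated by a finite set S, and let X be the Cayley graph of G with respect to S. Assume that for every natural number n the ball of radius n in the word metric satisfies b(n) ≥ (n+1)(n+2)/2. Then every finite nonempty subset A of the vertices of X satisfies depth(A) < 4√2 · |∂A|, equivalently depth(A)² < 32 |∂A|². -/
lemma cayleyGraph_adj_iff {G : Type*} [Group G] {S : Set G} {x y : G} :
    (cayleyGraph S).Adj x y ↔ x ≠ y ∧ x⁻¹ * y ∈ S ∪ S⁻¹ := Iff.rfl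

namespace CayleyAux
open scoped Classical
open SimpleGraph
variable {G : Type*} [Group G] {S : Set G}

lemma mem_symm {s : G} (h : s ∈ S ∪ S⁻¹) : s⁻¹ ∈ S ∪ S⁻¹ := by
  rcases h with h | h
  · exact Or.inr (Set.inv_mem_inv.mpr h)
  · exact Or.inl (by simpa using h)

lemma adj_mul {x s : G} (h : s ∈ S ∪ S⁻¹) (hne : x * s ≠ x) :
    (cayleyGraph S).Adj (x * s) x :=
  cayleyGraph_adj_iff.2 ⟨hne, by simpa using mem_symm h⟩

/-- left multiplication as a graph homomorphism -/
def mulLeftHom (g : G) : cayleyGraph S →g cayleyGraph S where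
  toFun x := g * x
  map_rel' := by
    intro a b h
    obtain ⟨h1, h2⟩ := cayleyGraph_adj_iff.1 h
    exact cayleyGraph_adj_iff.2 ⟨by simpa using h1, by simpa [mul_assoc] using h2⟩

@[simp] lemma mulLeftHom_apply (g x : G) : mulLeftHom (S := S) g x = g * x := rfl

lemma reachable_one (hgen : Subgroup.closure S = ⊤) (x : G) :
    (cayleyGraph S).Reachable 1 x := by
  have hx : x ∈ Subgroup.closure S := hgen ▸ Subgroup.mem_top x
  induction hx using Subgroup.closure_induction with
  | mem s hs =>
    by_cases h1 : s = 1
    · rw [h1]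
    · exact SimpleGraph.Adj.reachable (cayleyGraph_adj_iff.2 ⟨fun h => h1 h.symm, by simpa using Or.inl hs⟩)
  | one => exact Reachable.refl 1
  | mul x y _ _ hx hy =>
    refine hx.trans ?_
    have h2 : (cayleyGraph S).Reachable (x * 1) (x * y) := hy.map (mulLeftHom (S := S) x)
    rwa [mul_one] at h2
  | inv x _ hx =>
    have h2 : (cayleyGraph S).Reachable (x⁻¹ * 1) (x⁻¹ * x) := hx.map (mulLeftHom (S := S) x⁻¹)
    rw [mul_one, inv_mul_cancel] at h2
    exact h2.symm

lemma reachable_all (hgen : Subgroup.closure S = ⊤) (x y : G) :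
    (cayleyGraph S).Reachable x y :=
  (reachable_one hgen x).symm.trans (reachable_one hgen y)

lemma dist_mul_left_le (hgen : Subgroup.closure S = ⊤) (g x y : G) :
    (cayleyGraph S).dist (g * x) (g * y) ≤ (cayleyGraph S).dist x y := by
  obtain ⟨w, hw⟩ := (reachable_all hgen x y).exists_walk_length_eq_dist
  calc (cayleyGraph S).dist (g * x) (g * y) ≤ (w.map (mulLeftHom g)).length :=
        SimpleGraph.dist_le _
    _ = (cayleyGraph S).dist x y := by rw [SimpleGraph.Walk.length_map, hw]

lemma dist_mul_left (hgen : Subgroup.closure S = ⊤) (g x y : G) :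
    (cayleyGraph S).dist (g * x) (g * y) = (cayleyGraph S).dist x y := by
  refine le_antisymm (dist_mul_left_le hgen g x y) ?_
  have := dist_mul_left_le hgen g⁻¹ (g * x) (g * y)
  simpa using this

/-- the word of a walk -/
lemma walk_word {u v : G} (w : (cayleyGraph S).Walk u v) :
    ∃ l : List G, (∀ s ∈ l, s ∈ S ∪ S⁻¹) ∧ l.length = w.length ∧ u * l.prod = v := by
  induction w with
  | nil => exact ⟨[], by simp, by simp, by simp⟩
  | @cons u u' v h p ih =>
    obtain ⟨l, hl, hlen, hprod⟩ := ih
    exact ⟨(u⁻¹ * u') :: l, by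
        intro s hs
        rcases List.mem_cons.mp hs with rfl | hs
        · exact (cayleyGraph_adj_iff.1 h).2
        · exact hl _ hs,
      by simp [hlen], by simpa [mul_assoc] using hprod⟩

lemma ball_finite (hS : S.Finite) (hgen : Subgroup.closure S = ⊤) (n : ℕ) :
    {x : G | (cayleyGraph S).dist 1 x ≤ n}.Finite := by
  induction n with
  | zero =>
    refine Set.Finite.subset (Set.finite_singleton 1) ?_
    intro x hx
    have : (cayleyGraph S).dist 1 x = 0 := Nat.le_zero.mp hx
    have := ((reachable_one hgen x).dist_eq_zero_iff).mp this
    simp [this.symm]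
  | succ n ih =>
    have hsub : {x : G | (cayleyGraph S).dist 1 x ≤ n + 1} ⊆
        {x : G | (cayleyGraph S).dist 1 x ≤ n} ∪
          ⋃ s ∈ S ∪ S⁻¹, (fun y => y * s) '' {x : G | (cayleyGraph S).dist 1 x ≤ n} := by
      intro x hx
      by_cases hxn : (cayleyGraph S).dist 1 x ≤ n
      · exact Or.inl hxn
      · have hd : (cayleyGraph S).dist 1 x = n + 1 := le_antisymm hx (not_le.mp hxn)
        obtain ⟨w, hw⟩ := (reachable_one hgen x).exists_walk_length_eq_dist
        have hwr : w.reverse.length = n + 1 := by rw [SimpleGraph.Walk.length_reverse, hw, hd]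
        right
        cases hrev : w.reverse with
        | nil => rw [hrev] at hwr; simp at hwr
        | @cons _ y _ h p =>
          rw [hrev] at hwr
          simp at hwr
          have hy : (cayleyGraph S).dist 1 y ≤ n := by
            rw [SimpleGraph.dist_comm]
            calc (cayleyGraph S).dist y 1 ≤ p.length := SimpleGraph.dist_le p
              _ = n := hwr
          have hs : y⁻¹ * x ∈ S ∪ S⁻¹ := by
            have he : y⁻¹ * x = (x⁻¹ * y)⁻¹ := by group
            rw [he]; exact mem_symm (cayleyGraph_adj_iff.1 h).2
          exact Set.mem_biUnion hs ⟨y, hy, by group⟩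
    exact Set.Finite.subset (ih.union ((hS.union hS.inv).biUnion fun s _ => ih.image _)) hsub

lemma ball_translate (hgen : Subgroup.closure S = ⊤) (u : G) (m : ℕ) :
    {x : G | (cayleyGraph S).dist u x ≤ m} =
      (fun y => u * y) '' {x : G | (cayleyGraph S).dist 1 x ≤ m} := by
  ext x
  simp only [Set.mem_setOf_eq, Set.mem_image]
  constructor
  · intro hx
    have h1 : (cayleyGraph S).dist 1 (u⁻¹ * x) = (cayleyGraph S).dist u x := by
      simpa using dist_mul_left hgen u⁻¹ u x
    exact ⟨u⁻¹ * x, by rw [h1]; exact hx, by group⟩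
  · rintro ⟨y, hy, rfl⟩
    have h1 : (cayleyGraph S).dist u (u * y) = (cayleyGraph S).dist 1 y := by
      simpa using dist_mul_left hgen u 1 y
    exact h1.trans_le hy


open scoped Classical
variable {G : Type*} [Group G] {S : Set G}

lemma telescope (FA FB : Finset G)
    (hFB : ∀ x ∈ FA, ∀ s ∈ S ∪ S⁻¹, x * s ∉ FA → x * s ∈ FB) :
    ∀ l : List G, (∀ s ∈ l, s ∈ S ∪ S⁻¹) →
      (FA.filter fun x => x * l.prod ∉ FA).card ≤ l.length * FB.card := by
  intro l
  induction l with
  | nil =>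
    intro _
    simp only [List.prod_nil, mul_one, List.length_nil, Nat.zero_mul, Nat.le_zero,
      Finset.card_eq_zero]
    exact Finset.filter_eq_empty_iff.mpr (fun {x} hx => not_not_intro hx)
  | cons s t ih =>
    intro hmem
    have hs : s ∈ S ∪ S⁻¹ := hmem s (List.mem_cons_self)
    have hts : ∀ x ∈ t, x ∈ S ∪ S⁻¹ := fun x hx => hmem x (List.mem_cons_of_mem s hx)
    have hsub : (FA.filter fun x => x * (s :: t).prod ∉ FA) ⊆
        (FA.filter fun x => x * s ∉ FA) ∪
          (FA.filter fun x => x * s ∈ FA ∧ (x * s) * t.prod ∉ FA) := by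
      intro x hx
      rw [Finset.mem_filter] at hx
      obtain ⟨hxA, hxp⟩ := hx
      rw [List.prod_cons, ← mul_assoc] at hxp
      by_cases h : x * s ∈ FA
      · exact Finset.mem_union_right _ (Finset.mem_filter.mpr ⟨hxA, h, hxp⟩)
      · exact Finset.mem_union_left _ (Finset.mem_filter.mpr ⟨hxA, h⟩)
    have h1 : (FA.filter fun x => x * s ∉ FA).card ≤ FB.card := by
      apply Finset.card_le_card_of_injOn (fun x => x * s)
      · intro x hx
        rw [Finset.mem_coe, Finset.mem_filter] at hx
        exact hFB x hx.1 s hs hx.2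
      · exact fun p _ q _ h => mul_right_cancel h
    have h2 : (FA.filter fun x => x * s ∈ FA ∧ (x * s) * t.prod ∉ FA).card ≤
        (FA.filter fun y => y * t.prod ∉ FA).card := by
      apply Finset.card_le_card_of_injOn (fun x => x * s)
      · intro x hx
        rw [Finset.mem_coe, Finset.mem_filter] at hx ⊢
        exact ⟨hx.2.1, hx.2.2⟩
      · exact fun p _ q _ h => mul_right_cancel h
    calc (FA.filter fun x => x * (s :: t).prod ∉ FA).card
        ≤ ((FA.filter fun x => x * s ∉ FA) ∪
            (FA.filter fun x => x * s ∈ FA ∧ (x * s) * t.prod ∉ FA)).card :=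
          Finset.card_le_card hsub
      _ ≤ (FA.filter fun x => x * s ∉ FA).card +
            (FA.filter fun x => x * s ∈ FA ∧ (x * s) * t.prod ∉ FA).card :=
          Finset.card_union_le _ _
      _ ≤ FB.card + t.length * FB.card := Nat.add_le_add h1 (h2.trans (ih hts))
      _ = (s :: t).length * FB.card := by simp [List.length_cons]; ring

end CayleyAux

set_option maxHeartbeats 2000000 in
/-- If the Cayley graph of a finitely generated group has at least quadratic growth,
`b(n) ≥ (n+1)(n+2)/2`, then every finite nonempty set `A` of vertices satisfies
`depth(A) < 4√2 ⬝ |∂A|`. -/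
theorem stmt_8 {G : Type*} [Group G] (S : Set G) (hS : S.Finite)
    (hgen : Subgroup.closure S = ⊤)
    (hb : ∀ n : ℕ, (n + 1) * (n + 2) ≤ 2 * ballCard S n)
    (A : Set G) (hA : A.Finite) (hne : A.Nonempty) :
    ((cayleyGraph S).depthSet A : ℝ)
      < 4 * Real.sqrt 2 * (((cayleyGraph S).boundarySet A).ncard : ℝ) := by
  classical
  have hSym : ∀ {s : G}, s ∈ S ∪ S⁻¹ → s⁻¹ ∈ S ∪ S⁻¹ := fun h => CayleyAux.mem_symm h
  set d := (cayleyGraph S).depthSet A with hd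
  have hdmem : d ∈ ((fun u => (cayleyGraph S).distToSet u Aᶜ) '' A) :=
    Nat.sSup_mem (hne.image _) ((hA.image _).bddAbove)
  clear_value d
  set a := A.ncard with haeq
  clear_value a
  have ha : 0 < a := by rw [haeq]; exact (Set.ncard_pos hA).mpr hne
  -- the boundary is finite
  have hBdsub : (cayleyGraph S).boundarySet A ⊆ Set.image2 (fun v s => v * s) A (S ∪ S⁻¹) := by
    rintro u ⟨hu, v, hv, hadj⟩
    refine ⟨v, hv, v⁻¹ * u, ?_, by group⟩
    have he : v⁻¹ * u = (u⁻¹ * v)⁻¹ := by group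
    rw [he]; exact hSym (cayleyGraph_adj_iff.1 hadj).2
  have hBdFin : ((cayleyGraph S).boundarySet A).Finite :=
    (hA.image2 _ (hS.union hS.inv)).subset hBdsub
  set P := ((cayleyGraph S).boundarySet A).ncard with hP
  clear_value P
  -- the complement is nonempty
  have hAc : Aᶜ.Nonempty := by
    rw [Set.nonempty_compl]
    intro hAuniv
    have hsub : {x : G | (cayleyGraph S).dist 1 x ≤ 2 * a} ⊆ A := by
      rw [hAuniv]; exact fun x _ => trivial
    have h1 : ballCard S (2 * a) ≤ a := by
      have h0 := Set.ncard_le_ncard hsub hA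
      rwa [← haeq] at h0
    have h2 := hb (2 * a)
    nlinarith [h1, h2]
  -- a deepest point u
  obtain ⟨u, huA, hud⟩ := hdmem
  simp only at hud
  -- d*d + d ≤ 2*a
  have hd2 : d * d + d ≤ 2 * a := by
    rcases Nat.eq_zero_or_pos d with h0 | hpos
    · rw [h0]; simp
    · obtain ⟨m, hm⟩ : ∃ m, d = m + 1 := ⟨d - 1, by omega⟩
      have hball : {x : G | (cayleyGraph S).dist u x ≤ m} ⊆ A := by
        intro x hx
        by_contra hxA
        have hle : (cayleyGraph S).distToSet u Aᶜ ≤ (cayleyGraph S).dist u x :=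
          Nat.sInf_le ⟨x, hxA, rfl⟩
        rw [hud, hm] at hle
        have hx' : (cayleyGraph S).dist u x ≤ m := hx
        omega
      have hcard : ballCard S m ≤ a := by
        rw [haeq]
        have hmono := Set.ncard_le_ncard hball hA
        rwa [CayleyAux.ball_translate hgen u m,
          Set.ncard_image_of_injective _ (mul_right_injective u)] at hmono
      have h2 := hb m
      rw [hm]
      nlinarith [h2, hcard]
  -- choice of n
  set n := Nat.sqrt (6 * a) with hneq
  have hn1 : n * n ≤ 6 * a := by
    have h := Nat.sqrt_le' (6 * a)
    rw [← hneq] at h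
    nlinarith [h]
  have hn2 : 6 * a < (n + 1) * (n + 1) := by
    have h := Nat.lt_succ_sqrt' (6 * a)
    rw [← hneq] at h
    nlinarith [h]
  have hnpos : 1 ≤ n := by
    rw [hneq, Nat.le_sqrt']
    nlinarith [ha]
  clear_value n
  -- the ball of radius n as a finset
  have hNfin := CayleyAux.ball_finite hS hgen n
  set FN := hNfin.toFinset with hFN
  have hNcard : FN.card = ballCard S n := (Set.ncard_eq_toFinset_card _ hNfin).symm
  clear_value FN
  have hb3 : 3 * a ≤ FN.card := by
    have h2 := hb n
    have h6 : 6 * a ≤ (n + 1) * (n + 2) := by nlinarith [hn2]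
    omega
  set FA := hA.toFinset with hFA
  have hFAcard : FA.card = a := by
    rw [haeq]; exact (Set.ncard_eq_toFinset_card _ hA).symm
  clear_value FA
  set FB := hBdFin.toFinset with hFB
  have hFBcard : FB.card = P := by
    rw [hP]; exact (Set.ncard_eq_toFinset_card _ hBdFin).symm
  clear_value FB
  have hFBmem : ∀ x ∈ FA, ∀ s ∈ S ∪ S⁻¹, x * s ∉ FA → x * s ∈ FB := by
    intro x hx s hs hxs
    rw [hFA, Set.Finite.mem_toFinset] at hx hxs
    rw [hFB, Set.Finite.mem_toFinset]
    refine ⟨hxs, x, hx, cayleyGraph_adj_iff.2 ⟨?_, ?_⟩⟩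
    · intro h; exact hxs (by rw [h]; exact hx)
    · have he : (x * s)⁻¹ * x = s⁻¹ := by group
      rw [he]; exact hSym hs
  -- averaging
  have hx_bound : ∀ x ∈ FA, FN.card - a ≤ (FN.filter fun g => x * g ∉ FA).card := by
    intro x hx
    have hsplit : (FN.filter fun g => x * g ∈ FA).card
        + (FN.filter fun g => x * g ∉ FA).card = FN.card := by
      rw [← Finset.card_union_of_disjoint]
      · rw [Finset.filter_union_filter_not_eq]
      · exact Finset.disjoint_filter_filter_not FN FN _
    have hin : (FN.filter fun g => x * g ∈ FA).card ≤ a := by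
      rw [← hFAcard]
      apply Finset.card_le_card_of_injOn (fun g => x * g)
      · intro g hg; exact (Finset.mem_filter.mp hg).2
      · exact fun g1 _ g2 _ h => mul_left_cancel h
    omega
  have hsum : ∑ x ∈ FA, (FN.filter fun g => x * g ∉ FA).card
      = ∑ g ∈ FN, (FA.filter fun x => x * g ∉ FA).card := by
    simp only [Finset.card_filter]
    rw [Finset.sum_comm]
  have htot : FA.card * (FN.card - a) ≤ ∑ g ∈ FN, (FA.filter fun x => x * g ∉ FA).card := by
    rw [← hsum]
    calc FA.card * (FN.card - a) = ∑ _x ∈ FA, (FN.card - a) := by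
          rw [Finset.sum_const, smul_eq_mul]
      _ ≤ _ := Finset.sum_le_sum hx_bound
  have hNne : FN.Nonempty := by
    refine ⟨1, ?_⟩
    rw [hFN, Set.Finite.mem_toFinset]
    show (cayleyGraph S).dist 1 1 ≤ n
    rw [SimpleGraph.dist_self]
    exact Nat.zero_le n
  have hsum2 : ∑ _g ∈ FN, 2 * a ≤ ∑ g ∈ FN, 3 * (FA.filter fun x => x * g ∉ FA).card := by
    have hba : a ≤ FN.card := by omega
    obtain ⟨c, hc⟩ : ∃ c, FN.card = a + c := ⟨FN.card - a, by omega⟩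
    have hkey1 : FN.card * (2 * a) ≤ 3 * (FA.card * (FN.card - a)) := by
      rw [hFAcard, hc]
      have h2c : 2 * a ≤ c := by omega
      have := Nat.mul_le_mul_left a h2c
      have hsub : a + c - a = c := by omega
      rw [hsub]
      nlinarith [this]
    calc ∑ _g ∈ FN, 2 * a = FN.card * (2 * a) := by rw [Finset.sum_const, smul_eq_mul]
      _ ≤ 3 * (FA.card * (FN.card - a)) := hkey1
      _ ≤ 3 * ∑ g ∈ FN, (FA.filter fun x => x * g ∉ FA).card := Nat.mul_le_mul_left 3 htot
      _ = ∑ g ∈ FN, 3 * (FA.filter fun x => x * g ∉ FA).card := by rw [Finset.mul_sum]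
  obtain ⟨g, hgN, hgcnt⟩ := Finset.exists_le_of_sum_le hNne hsum2
  have hgdist : (cayleyGraph S).dist 1 g ≤ n := by
    rw [hFN, Set.Finite.mem_toFinset] at hgN; exact hgN
  obtain ⟨w, hw⟩ := (CayleyAux.reachable_one hgen g).exists_walk_length_eq_dist
  obtain ⟨l, hl, hlen, hprod⟩ := CayleyAux.walk_word w
  rw [one_mul] at hprod
  have hcnt : (FA.filter fun x => x * g ∉ FA).card ≤ n * P := by
    rw [← hprod]
    calc (FA.filter fun x => x * l.prod ∉ FA).card ≤ l.length * FB.card :=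
          CayleyAux.telescope FA FB hFBmem l hl
      _ ≤ n * P := by
          rw [hFBcard]
          exact Nat.mul_le_mul_right P (by rw [hlen, hw]; exact hgdist)
  have hkey : 2 * a ≤ 3 * (n * P) :=
    le_trans hgcnt (Nat.mul_le_mul_left 3 hcnt)
  -- real arithmetic
  have haR : (1 : ℝ) ≤ a := by exact_mod_cast ha
  have hdR : (d : ℝ) ^ 2 ≤ 2 * a := by
    have h1 : d * d ≤ 2 * a := by omega
    have := (Nat.cast_le (α := ℝ)).mpr h1
    push_cast at this
    nlinarith [this]
  have hnR : (n : ℝ) ^ 2 ≤ 6 * a := by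
    have := (Nat.cast_le (α := ℝ)).mpr hn1
    push_cast at this
    nlinarith [this]
  have hPkey : (2 : ℝ) * a ≤ 3 * (n * P) := by exact_mod_cast hkey
  have hs2 : Real.sqrt 2 ^ 2 = 2 := Real.sq_sqrt (by norm_num)
  have hmain : 3 * (n : ℝ) * d < 8 * Real.sqrt 2 * a := by
    have h1 : ((n : ℝ) * d) ^ 2 ≤ 12 * (a : ℝ) ^ 2 := by
      nlinarith [mul_le_mul hnR hdR (sq_nonneg (d : ℝ)) (by nlinarith : (0:ℝ) ≤ 6 * a)]
    have hsq : (3 * (n : ℝ) * d) ^ 2 < (8 * Real.sqrt 2 * a) ^ 2 := by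
      nlinarith [h1, hs2, mul_le_mul haR haR (by norm_num : (0:ℝ) ≤ 1) (by linarith)]
    exact lt_of_pow_lt_pow_left₀ 2 (by positivity) hsq
  have hn0 : (0 : ℝ) < 3 * n := by
    have : (1 : ℝ) ≤ n := by exact_mod_cast hnpos
    linarith
  have hfin : (3 * (n : ℝ)) * d < (3 * (n : ℝ)) * (4 * Real.sqrt 2 * P) := by
    calc (3 * (n : ℝ)) * d < 8 * Real.sqrt 2 * a := by
          calc (3 * (n : ℝ)) * d = 3 * (n : ℝ) * d := by ring
            _ < _ := hmain
      _ = 4 * Real.sqrt 2 * (2 * a) := by ring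
      _ ≤ 4 * Real.sqrt 2 * (3 * (n * P)) := by
          apply mul_le_mul_of_nonneg_left hPkey (by positivity)
      _ = (3 * (n : ℝ)) * (4 * Real.sqrt 2 * P) := by ring
  exact (mul_lt_mul_iff_right₀ hn0).mp hfin
end

section
/- (Wilkie–Van den Dries growth dichotomy) Let G be a group generated by a finite set S and let X be the Cayley graph of G with respect to S. Then exactly one of the following holds: (1) there exist α, β ≥ 0 such that b(n) ≤ α n + β for all natural numbers n; (2) b(n) ≥ (n+1)(n+2)/2 for all natural numbers n. -/
namespace WvdD


variable {G : Type*} [Group G] (S : Set G)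

/-- the symmetrized generating set -/
abbrev T : Set G := S ∪ S⁻¹

variable {S}

lemma T_inv {g : G} (hg : g ∈ T S) : g⁻¹ ∈ T S := by
  rcases hg with h | h
  · exact Or.inr (Set.inv_mem_inv.mpr h)
  · exact Or.inl (by simpa using h)

lemma adj_mul {x t : G} (ht : t ∈ T S) (hne : t ≠ 1) :
    (cayleyGraph S).Adj x (x * t) := by
  show x ≠ x * t ∧ x⁻¹ * (x * t) ∈ S ∪ S⁻¹
  constructor
  · intro h
    exact hne (by simpa using h.symm)
  · simpa using ht

lemma dist_mul_le {x t : G} (ht : t ∈ T S) : (cayleyGraph S).dist x (x * t) ≤ 1 := by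
  by_cases h1 : t = 1
  · simp [h1, SimpleGraph.dist_self]
  · exact le_of_eq (SimpleGraph.dist_eq_one_iff_adj.mpr (adj_mul ht h1))

lemma reachable_mul_word (x : G) (l : List G) (hl : ∀ g ∈ l, g ∈ T S) :
    (cayleyGraph S).Reachable x (x * l.prod) := by
  induction l generalizing x with
  | nil => simpa using SimpleGraph.Reachable.refl x
  | cons t l ih =>
    have h1 : (cayleyGraph S).Reachable x (x * t) := by
      by_cases h : t = 1
      · simpa [h] using SimpleGraph.Reachable.refl x
      · exact (adj_mul (hl t (by simp)) h).reachable
    have h2 := ih (x * t) (fun g hg => hl g (by simp [hg]))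
    rw [List.prod_cons, ← mul_assoc]
    exact h1.trans h2

lemma exists_word (hgen : Subgroup.closure S = ⊤) (x : G) :
    ∃ l : List G, (∀ g ∈ l, g ∈ T S) ∧ l.prod = x := by
  have hx : x ∈ Subgroup.closure S := by rw [hgen]; trivial
  induction hx using Subgroup.closure_induction with
  | mem g hg => exact ⟨[g], by simp [T, hg], by simp⟩
  | one => exact ⟨[], by simp, by simp⟩
  | mul a b _ _ iha ihb =>
    obtain ⟨la, hla, hpa⟩ := iha
    obtain ⟨lb, hlb, hpb⟩ := ihb
    exact ⟨la ++ lb, by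
      intro g hg
      rcases List.mem_append.mp hg with h | h
      · exact hla g h
      · exact hlb g h, by simp [hpa, hpb]⟩
  | inv a _ ih =>
    obtain ⟨l, hl, hp⟩ := ih
    refine ⟨(l.map (·⁻¹)).reverse, ?_, ?_⟩
    · intro g hg
      simp only [List.mem_reverse, List.mem_map] at hg
      obtain ⟨g', hg', rfl⟩ := hg
      exact T_inv (hl g' hg')
    · rw [← List.prod_inv_reverse]; simp [hp]

lemma reachable_one (hgen : Subgroup.closure S = ⊤) (x : G) :
    (cayleyGraph S).Reachable 1 x := by
  obtain ⟨l, hl, hp⟩ := exists_word hgen x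
  simpa [hp] using reachable_mul_word 1 l hl

lemma connected (hgen : Subgroup.closure S = ⊤) : (cayleyGraph S).Connected := by
  rw [SimpleGraph.connected_iff_exists_forall_reachable]
  exact ⟨1, reachable_one hgen⟩

lemma dist_le_word (hgen : Subgroup.closure S = ⊤) (x : G) (l : List G)
    (hl : ∀ g ∈ l, g ∈ T S) : (cayleyGraph S).dist x (x * l.prod) ≤ l.length := by
  induction l generalizing x with
  | nil => simp
  | cons t l ih =>
    have h2 := ih (x * t) (fun g hg => hl g (by simp [hg]))
    calc (cayleyGraph S).dist x (x * (t :: l).prod)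
        ≤ (cayleyGraph S).dist x (x * t) + (cayleyGraph S).dist (x * t) (x * (t :: l).prod) :=
          (connected hgen).dist_triangle
      _ ≤ 1 + l.length := by
          refine add_le_add (dist_mul_le (hl t (by simp))) ?_
          rw [List.prod_cons, ← mul_assoc]
          exact h2
      _ = (t :: l).length := by simp [add_comm]

lemma walk_word {u v : G} (p : (cayleyGraph S).Walk u v) :
    ∃ l : List G, (∀ g ∈ l, g ∈ T S) ∧ l.length = p.length ∧ u * l.prod = v := by
  induction p with
  | nil => exact ⟨[], by simp, by simp, by simp⟩
  | @cons a b c h p ih =>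
    obtain ⟨l, hl, hlen, hprod⟩ := ih
    refine ⟨(a⁻¹ * b) :: l, ?_, by simp [hlen], ?_⟩
    · intro g hg
      rcases List.mem_cons.mp hg with h' | h'
      · exact h' ▸ (show a ≠ b ∧ a⁻¹ * b ∈ S ∪ S⁻¹ from h).2
      · exact hl g h'
    · rw [List.prod_cons, ← mul_assoc, mul_inv_cancel_left, hprod]

lemma exists_word_dist (hgen : Subgroup.closure S = ⊤) (x : G) :
    ∃ l : List G, (∀ g ∈ l, g ∈ T S) ∧ l.length = (cayleyGraph S).dist 1 x ∧ l.prod = x := by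
  obtain ⟨p, hp⟩ := (reachable_one hgen x).exists_walk_length_eq_dist
  obtain ⟨l, hl, hlen, hprod⟩ := walk_word p
  exact ⟨l, hl, by rw [hlen, hp], by simpa using hprod⟩

/-- The ball of radius n. -/
def ball (S : Set G) (n : ℕ) : Set G := {x : G | (cayleyGraph S).dist 1 x ≤ n}

lemma ballCard_eq (n : ℕ) : ballCard S n = (ball S n).ncard := rfl

lemma mem_ball_iff (hgen : Subgroup.closure S = ⊤) (n : ℕ) (x : G) :
    x ∈ ball S n ↔ ∃ l : List G, (∀ g ∈ l, g ∈ T S) ∧ l.length ≤ n ∧ l.prod = x := by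
  constructor
  · intro hx
    obtain ⟨l, hl, hlen, hprod⟩ := exists_word_dist hgen x
    exact ⟨l, hl, by rw [hlen]; exact hx, hprod⟩
  · rintro ⟨l, hl, hlen, rfl⟩
    have := dist_le_word hgen 1 l hl
    simp only [one_mul] at this
    exact this.trans hlen



variable {G : Type*} [Group G] {S : Set G}

lemma T_finite (hS : S.Finite) : (T S).Finite := hS.union hS.inv

lemma words_finite {s : Set G} (hs : s.Finite) (n : ℕ) :
    {l : List G | (∀ g ∈ l, g ∈ s) ∧ l.length ≤ n}.Finite := by
  induction n with
  | zero =>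
    apply Set.Finite.subset (Set.finite_singleton ([] : List G))
    rintro l ⟨-, hlen⟩
    simpa using List.length_eq_zero_iff.mp (Nat.le_zero.mp hlen)
  | succ n ih =>
    apply Set.Finite.subset (Set.Finite.insert ([] : List G) (Set.Finite.image2 List.cons hs ih))
    rintro l ⟨hmem, hlen⟩
    cases l with
    | nil => simp
    | cons a l' =>
      right
      refine ⟨a, hmem a (by simp), l', ⟨fun g hg => hmem g (by simp [hg]), ?_⟩, rfl⟩
      simpa using Nat.succ_le_succ_iff.mp hlen

lemma ball_finite (hS : S.Finite) (hgen : Subgroup.closure S = ⊤) (n : ℕ) :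
    (ball S n).Finite := by
  have h : ball S n ⊆ List.prod '' {l : List G | (∀ g ∈ l, g ∈ T S) ∧ l.length ≤ n} := by
    intro x hx
    obtain ⟨l, hl, hlen, hprod⟩ := (mem_ball_iff hgen n x).mp hx
    exact ⟨l, ⟨hl, hlen⟩, hprod⟩
  exact Set.Finite.subset (Set.Finite.image _ (words_finite (T_finite hS) n)) h

lemma one_mem_ball (n : ℕ) : (1 : G) ∈ ball S n := by
  simp [ball, SimpleGraph.dist_self]

lemma ball_mono {n m : ℕ} (h : n ≤ m) : ball S n ⊆ ball S m :=
  fun _ hx => le_trans hx h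

lemma mul_mem_ball (hgen : Subgroup.closure S = ⊤) {y t : G} {n : ℕ}
    (hy : y ∈ ball S n) (ht : t ∈ T S) : y * t ∈ ball S (n + 1) := by
  have h := (connected hgen).dist_triangle (u := (1:G)) (v := y) (w := y * t)
  have h2 : (cayleyGraph S).dist y (y * t) ≤ 1 := dist_mul_le ht
  exact le_trans h (add_le_add hy h2)

lemma ball_succ (hgen : Subgroup.closure S = ⊤) {n : ℕ} {x : G} (hx : x ∈ ball S (n + 1)) :
    x = 1 ∨ ∃ y ∈ ball S n, ∃ t ∈ T S, x = y * t := by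
  obtain ⟨l, hl, hlen, hprod⟩ := (mem_ball_iff hgen (n + 1) x).mp hx
  rcases List.eq_nil_or_concat l with rfl | ⟨L, b, rfl⟩
  · left; simp [← hprod]
  · right
    refine ⟨L.prod, ?_, b, hl b (by simp), ?_⟩
    · apply (mem_ball_iff hgen n L.prod).mpr
      refine ⟨L, fun g hg => hl g (by simp [hg]), ?_, rfl⟩
      have := hlen
      simp only [List.concat_eq_append, List.length_append, List.length_singleton] at this
      omega
    · rw [← hprod]; simp

lemma ball_stable (hgen : Subgroup.closure S = ⊤) {n : ℕ}
    (h : ball S (n + 1) ⊆ ball S n) (m : ℕ) : ball S m ⊆ ball S n := by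
  rcases le_or_gt m n with hm | hm
  · exact ball_mono hm
  · obtain ⟨d, rfl⟩ : ∃ d, m = n + d := ⟨m - n, by omega⟩
    clear hm
    induction d with
    | zero => exact le_refl _
    | succ d ih =>
      intro x hx
      rcases ball_succ hgen (by rw [← Nat.add_assoc] at hx; exact hx) with rfl | ⟨y, hy, t, ht, rfl⟩
      · exact one_mem_ball n
      · exact h (mul_mem_ball hgen (ih hy) ht)

lemma exists_ball (hgen : Subgroup.closure S = ⊤) (x : G) : ∃ m, x ∈ ball S m := by
  obtain ⟨l, hl, hprod⟩ := exists_word hgen x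
  exact ⟨l.length, (mem_ball_iff hgen _ x).mpr ⟨l, hl, le_refl _, hprod⟩⟩

lemma ball_ssubset (hS : S.Finite) (hgen : Subgroup.closure S = ⊤)
    (hinf : Infinite G) (n : ℕ) : ball S n ⊂ ball S (n + 1) := by
  refine ⟨ball_mono (by omega), fun hsub => ?_⟩
  have : (Set.univ : Set G) ⊆ ball S n := by
    intro x _
    obtain ⟨m, hm⟩ := exists_ball hgen x
    exact ball_stable hgen hsub m hm
  have hfin : (Set.univ : Set G).Finite := Set.Finite.subset (ball_finite hS hgen n) this
  exact Set.infinite_univ (α := G) hfin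

lemma ballCard_strict (hS : S.Finite) (hgen : Subgroup.closure S = ⊤)
    (hinf : Infinite G) (n : ℕ) : ballCard S n < ballCard S (n + 1) :=
  Set.ncard_lt_ncard (ball_ssubset hS hgen hinf n) (ball_finite hS hgen (n + 1))

lemma ballCard_pos (hS : S.Finite) (hgen : Subgroup.closure S = ⊤) (n : ℕ) :
    1 ≤ ballCard S n := by
  rw [ballCard_eq]
  have : ({1} : Set G) ⊆ ball S n := by simp [one_mem_ball]
  calc 1 = ({1} : Set G).ncard := by simp
    _ ≤ _ := Set.ncard_le_ncard this (ball_finite hS hgen n)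



variable {G : Type*} [Group G] {S : Set G}



variable {α : Type*}

/-- `f` has period `ρ` on the interval `[a, b)`. -/
def HasPeriodOn (f : ℕ → α) (a b ρ : ℕ) : Prop :=
  ∀ x, a ≤ x → x + ρ < b → f x = f (x + ρ)

lemma HasPeriodOn.mono {f : ℕ → α} {a b a' b' ρ : ℕ} (h : HasPeriodOn f a b ρ)
    (ha : a ≤ a') (hb : b' ≤ b) : HasPeriodOn f a' b' ρ :=
  fun x hx hxρ => h x (le_trans ha hx) (lt_of_lt_of_le hxρ hb)

lemma periodic_shift {f : ℕ → α} {a b ρ : ℕ} (h : HasPeriodOn f a b ρ)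
    {x : ℕ} (hax : a ≤ x) (c : ℕ) (hyb : x + ρ * c < b) :
    f x = f (x + ρ * c) := by
  induction c with
  | zero => simp
  | succ c ih =>
    have hc : ρ * c ≤ ρ * (c + 1) := by nlinarith
    have h1 : f x = f (x + ρ * c) := ih (by omega)
    have h2 : f (x + ρ * c) = f (x + ρ * c + ρ) := h _ (by omega) (by
      have : ρ * (c + 1) = ρ * c + ρ := by ring
      omega)
    rw [h1, h2]
    congr 1
    ring

/-- congruent positions within a period-zone have equal values -/
lemma periodic_congr {f : ℕ → α} {a b ρ : ℕ} (hρ : 1 ≤ ρ) (h : HasPeriodOn f a b ρ)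
    {x y : ℕ} (hax : a ≤ x) (hay : a ≤ y) (hxb : x < b) (hyb : y < b)
    (hcong : x ≡ y [MOD ρ]) : f x = f y := by
  rcases le_total x y with hxy | hxy
  · obtain ⟨c, hc⟩ := (Nat.modEq_iff_dvd' hxy).mp hcong
    have hy : y = x + ρ * c := by omega
    subst hy
    exact periodic_shift h hax c hyb
  · obtain ⟨c, hc⟩ := (Nat.modEq_iff_dvd' hxy).mp hcong.symm
    have hx : x = y + ρ * c := by omega
    subst hx
    exact (periodic_shift h hay c hxb).symm

/-- there is a representative of any residue class in any window of length `ρ`. -/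
lemma exists_congr_in_window {ρ : ℕ} (hρ : 1 ≤ ρ) (base r : ℕ) :
    ∃ x, base ≤ x ∧ x < base + ρ ∧ x ≡ r [MOD ρ] := by
  have hlt : base % ρ < ρ := Nat.mod_lt _ (by omega)
  have hlt2 : (r + ρ - base % ρ) % ρ < ρ := Nat.mod_lt _ (by omega)
  refine ⟨base + (r + ρ - base % ρ) % ρ, Nat.le_add_right _ _, by omega, ?_⟩
  show (base + (r + ρ - base % ρ) % ρ) % ρ = r % ρ
  rw [Nat.add_mod_mod]
  have hdm := Nat.div_add_mod base ρ
  have hsplit : base + (r + ρ - base % ρ) = ρ * (base / ρ) + (r + ρ) := by omega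
  rw [hsplit, Nat.mul_add_mod, Nat.add_mod_right]

/-- **Chain lemma.** -/
lemma chain_contradiction {f : ℕ → α} {a E ρ Δ : ℕ} (hρ : 1 ≤ ρ) (hΔ : 1 ≤ Δ)
    (hzone : HasPeriodOn f a E ρ)
    (hrange : a + Δ + ρ ≤ E + 1)
    (hdef : f (E - ρ) ≠ f E)
    (heq : ∀ x, E - Δ - (ρ - 1) ≤ x → x ≤ E - Δ → f x = f (x + Δ)) : False := by
  classical
  have hPex : ∃ m, 0 < m ∧ m * Δ % ρ = 0 := ⟨ρ, by omega, by simp [Nat.mul_mod_left]⟩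
  set m := Nat.find hPex with hm_def
  obtain ⟨hm0, hmmod⟩ := Nat.find_spec hPex
  have hmin : ∀ i, 0 < i → i < m → ¬ (i * Δ % ρ = 0) := fun i hi0 him hbad =>
    Nat.find_min hPex him ⟨hi0, hbad⟩
  have hEρ : ρ ≤ E := by omega
  have hEΔ : Δ ≤ E := by omega
  -- main chain claim
  have hchain : ∀ i, i ≤ m - 1 → ∀ y, a ≤ y → y < E → y ≡ E + i * Δ [MOD ρ] →
      f y = f (E - ρ) := by
    intro i
    induction i with
    | zero =>
      intro _ y hay hyE hcong
      refine periodic_congr hρ hzone hay (by omega) hyE (by omega) ?_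
      simp only [Nat.mul_zero, Nat.zero_mul, Nat.add_zero] at hcong
      have hEE : E - ρ ≡ E [MOD ρ] :=
        (Nat.modEq_iff_dvd' (by omega)).mpr (by
          have h9 : E - (E - ρ) = ρ := by omega
          rw [h9])
      exact hcong.trans hEE.symm
    | succ i ih =>
      intro hi y hay hyE hcong
      obtain ⟨x, hx1, hx2, hx3⟩ := exists_congr_in_window hρ (E - Δ - (ρ - 1)) (E + i * Δ)
      have hxwin : x ≤ E - Δ := by omega
      have hxne : x ≠ E - Δ := by
        intro hxeq
        apply hmin (i + 1) (by omega) (by omega)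
        have h1 : E - Δ ≡ E + i * Δ [MOD ρ] := hxeq ▸ hx3
        have h2 : E - Δ + (i + 1) * Δ = E + i * Δ := by
          have : (i + 1) * Δ = i * Δ + Δ := by ring
          omega
        have h5 : E - Δ ≡ E - Δ + (i + 1) * Δ [MOD ρ] := by rw [h2]; exact h1
        have h6 : ρ ∣ (i + 1) * Δ := by
          have := (Nat.modEq_iff_dvd' (Nat.le_add_right _ _)).mp h5
          simpa using this
        omega
      have hfx : f x = f (E - ρ) := ih (by omega) x (by omega) (by omega) hx3
      have hstep : f x = f (x + Δ) := heq x hx1 hxwin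
      have hlast : f (x + Δ) = f y := by
        refine periodic_congr hρ hzone (by omega) hay (by omega) hyE ?_
        have h7 : E + i * Δ + Δ = E + (i + 1) * Δ := by ring
        calc x + Δ ≡ (E + i * Δ) + Δ [MOD ρ] := hx3.add_right Δ
          _ = E + (i + 1) * Δ := h7
          _ ≡ y [MOD ρ] := hcong.symm
      rw [← hfx, hstep, hlast]
  -- apply at i = m - 1, y = E - Δ
  have hfinal : f (E - Δ) = f (E - ρ) := by
    refine hchain (m - 1) le_rfl (E - Δ) (by omega) (by omega) ?_
    have h2 : E - Δ + m * Δ = E + (m - 1) * Δ := by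
      obtain ⟨k, hk⟩ : ∃ k, m = k + 1 := ⟨m - 1, by omega⟩
      have h3 : m * Δ = (m - 1) * Δ + Δ := by
        rw [hk, Nat.add_sub_cancel]; ring
      omega
    calc E - Δ ≡ E - Δ + m * Δ [MOD ρ] :=
        ((Nat.modEq_iff_dvd' (Nat.le_add_right _ _)).mpr
          (by simpa using Nat.dvd_of_mod_eq_zero hmmod)).symm.symm
      _ = E + (m - 1) * Δ := h2
  have hlink : f (E - Δ) = f E := by
    have h := heq (E - Δ) (by omega) le_rfl
    rwa [Nat.sub_add_cancel hEΔ] at h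
  exact hdef (by rw [← hfinal, hlink])



variable {α : Type*}

/-- the length-`K` window of `f` at position `i`, as a list -/
def window (f : ℕ → α) (K i : ℕ) : List α := List.ofFn (fun s : Fin K => f (i + s))

lemma window_eq_iff {f : ℕ → α} {K i j : ℕ} :
    window f K i = window f K j ↔ ∀ s < K, f (i + s) = f (j + s) := by
  rw [window, window, List.ofFn_inj]
  constructor
  · intro h s hs
    exact congrFun h ⟨s, hs⟩
  · intro h
    funext s
    exact h s s.2

/-- **Structure theorem**: a word whose `K`-windows take at most `K` values is periodic
with period at most `K` away from a prefix of length `≤ K` and a suffix of length `< K`. -/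
theorem exists_decomposition (f : ℕ → α) (n K : ℕ) (hK : 1 ≤ K) (hn : 2 * K ≤ n)
    (V : Finset (List α)) (hV : V.card ≤ K)
    (hwin : ∀ i, i + K ≤ n → window f K i ∈ V) :
    ∃ a ρ E, a ≤ K ∧ 1 ≤ ρ ∧ ρ ≤ K ∧ a + ρ + K ≤ E ∧ E ≤ n ∧ n + ρ ≤ E + K ∧
      HasPeriodOn f a E ρ := by
  classical
  obtain ⟨x, hx, y, hy, hxy, hwxy⟩ :
      ∃ x ∈ Finset.range (K + 1), ∃ y ∈ Finset.range (K + 1),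
        x ≠ y ∧ window f K x = window f K y := by
    apply Finset.exists_ne_map_eq_of_card_lt_of_maps_to
    · simpa using Nat.lt_succ_of_le hV
    · intro i hi
      simp at hi
      exact hwin i (by omega)
  simp only [Finset.mem_range] at hx hy
  obtain ⟨i₁, i₂, h12, hi₂K, hww⟩ :
      ∃ i₁ i₂, i₁ < i₂ ∧ i₂ ≤ K ∧ window f K i₁ = window f K i₂ := by
    rcases Nat.lt_or_ge x y with h | h
    · exact ⟨x, y, h, by omega, hwxy⟩
    · exact ⟨y, x, by omega, by omega, hwxy.symm⟩
  have hweq := window_eq_iff.mp hww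
  have hρ₀1 : 1 ≤ i₂ - i₁ := by omega
  have hρ₀K : i₂ - i₁ ≤ K := by omega
  have hper₀ : HasPeriodOn f i₁ (i₂ + K) (i₂ - i₁) := by
    intro z hz hzρ
    have hs : z - i₁ < K := by omega
    have h := hweq (z - i₁) hs
    have e1 : i₁ + (z - i₁) = z := by omega
    have e2 : i₂ + (z - i₁) = z + (i₂ - i₁) := by omega
    rw [e1, e2] at h
    exact h
  have hex : ∃ c, 1 ≤ c ∧ HasPeriodOn f i₁ (i₂ + K) c := ⟨i₂ - i₁, hρ₀1, hper₀⟩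
  set ρ := Nat.find hex with hρdef
  obtain ⟨hρ1, hperρ⟩ : 1 ≤ ρ ∧ HasPeriodOn f i₁ (i₂ + K) ρ := Nat.find_spec hex
  have hρmin : ∀ c, 1 ≤ c → c < ρ → ¬ HasPeriodOn f i₁ (i₂ + K) c := fun c h1 h2 hbad =>
    Nat.find_min hex h2 ⟨h1, hbad⟩
  have hρρ₀ : ρ ≤ i₂ - i₁ := Nat.find_min' hex ⟨hρ₀1, hper₀⟩
  set E := Nat.findGreatest (fun e => HasPeriodOn f i₁ e ρ) n with hEdef
  have hE : HasPeriodOn f i₁ E ρ :=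
    Nat.findGreatest_spec (P := fun e => HasPeriodOn f i₁ e ρ) (m := i₂ + K) (n := n)
      (by omega) hperρ
  have hEge : i₂ + K ≤ E :=
    Nat.le_findGreatest (P := fun e => HasPeriodOn f i₁ e ρ) (by omega) hperρ
  have hEn : E ≤ n := Nat.findGreatest_le (P := fun e => HasPeriodOn f i₁ e ρ) n
  have hzeK : i₁ + ρ + K ≤ E := by omega
  refine ⟨i₁, ρ, E, by omega, hρ1, by omega, by omega, hEn, ?_, hE⟩
  by_contra hcon
  push_neg at hcon
  have hEn' : E < n := by omega
  have hnot : ¬ HasPeriodOn f i₁ (E + 1) ρ :=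
    Nat.findGreatest_is_greatest (P := fun e => HasPeriodOn f i₁ e ρ) (n := n)
      (by omega) (by omega)
  have hdef : f (E - ρ) ≠ f E := by
    intro hbad
    apply hnot
    intro z hz hzρ
    rcases Nat.lt_or_ge (z + ρ) E with h | h
    · exact hE z hz h
    · have hz1 : z = E - ρ := by omega
      have hz2 : E - ρ + ρ = E := by omega
      rw [hz1, hz2]
      exact hbad
  have hEK : E - ρ + 1 + K ≤ n := by omega
  -- the three families of windows
  set A := (Finset.range ρ).image (fun c => window f K (i₁ + c)) with hA
  set B := (Finset.Icc (E - K + 1) (E - ρ)).image (fun p => window f K p) with hB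
  set Cw := window f K (E - ρ + 1) with hCw
  -- (a) A has ρ distinct elements
  have haux : ∀ c₁ c₂, c₁ < c₂ → c₂ < ρ → window f K (i₁ + c₁) = window f K (i₁ + c₂) →
      False := by
    intro c₁ c₂ h12c hc₂ hw
    have heqs := window_eq_iff.mp hw
    apply hρmin (c₂ - c₁) (by omega) (by omega)
    intro z hz hzc
    obtain ⟨x', hx'1, hx'2, hx'3⟩ := exists_congr_in_window hρ1 (i₁ + c₁) z
    have h1 : f z = f x' :=
      periodic_congr hρ1 hE hz (by omega) (by omega) (by omega) hx'3.symm
    have hs : x' - (i₁ + c₁) < K := by omega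
    have h2 : f x' = f (x' + (c₂ - c₁)) := by
      have h := heqs (x' - (i₁ + c₁)) hs
      have e1 : i₁ + c₁ + (x' - (i₁ + c₁)) = x' := by omega
      have e2 : i₁ + c₂ + (x' - (i₁ + c₁)) = x' + (c₂ - c₁) := by omega
      rw [e1, e2] at h
      exact h
    have h3 : f (x' + (c₂ - c₁)) = f (z + (c₂ - c₁)) :=
      periodic_congr hρ1 hE (by omega) (by omega) (by omega) (by omega)
        (hx'3.add_right (c₂ - c₁))
    rw [h1, h2, h3]
  have hAcard : A.card = ρ := by
    rw [hA, Finset.card_image_of_injOn, Finset.card_range]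
    intro c₁ h₁ c₂ h₂ heqw
    simp only [Finset.coe_range, Set.mem_Iio] at h₁ h₂
    rcases lt_trichotomy c₁ c₂ with h | h | h
    · exact absurd heqw (fun hw => haux c₁ c₂ h h₂ hw)
    · exact h
    · exact absurd heqw.symm (fun hw => haux c₂ c₁ h h₁ hw)
  -- (b) B has K - ρ distinct elements
  have haux2 : ∀ p p', E - K + 1 ≤ p → p < p' → p' ≤ E - ρ →
      window f K p = window f K p' → False := by
    intro p p' hp hpp' hp' hw
    have heqs := window_eq_iff.mp hw
    refine chain_contradiction (Δ := p' - p) hρ1 (by omega) hE (by omega) hdef ?_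
    intro z hz1 hz2
    have hs : z - p < K := by omega
    have h := heqs (z - p) hs
    have e1 : p + (z - p) = z := by omega
    have e2 : p' + (z - p) = z + (p' - p) := by omega
    rw [e1, e2] at h
    exact h
  have hBcard : B.card = K - ρ := by
    rw [hB, Finset.card_image_of_injOn, Nat.card_Icc]
    · omega
    · intro p₁ h₁ p₂ h₂ heqw
      simp only [Finset.coe_Icc, Set.mem_Icc] at h₁ h₂
      rcases lt_trichotomy p₁ p₂ with h | h | h
      · exact absurd heqw (fun hw => haux2 p₁ p₂ h₁.1 h h₂.2 hw)
      · exact h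
      · exact absurd heqw.symm (fun hw => haux2 p₂ p₁ h₂.1 h h₁.2 hw)
  -- (c) A and B are disjoint
  have hABdisj : ∀ w, w ∈ A → w ∈ B → False := by
    intro w hwA hwB
    rw [hA, Finset.mem_image] at hwA
    rw [hB, Finset.mem_image] at hwB
    obtain ⟨c, hcmem, hcw⟩ := hwA
    obtain ⟨p, hpmem, hpw⟩ := hwB
    simp only [Finset.mem_range] at hcmem
    simp only [Finset.mem_Icc] at hpmem
    have heqs := window_eq_iff.mp (hcw.trans hpw.symm)
    have h1 := heqs (E - ρ - p) (by omega)
    have h2 := heqs (E - p) (by omega)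
    have e1 : p + (E - ρ - p) = E - ρ := by omega
    have e2 : p + (E - p) = E := by omega
    rw [e1] at h1
    rw [e2] at h2
    have h3 : f (i₁ + c + (E - ρ - p)) = f (i₁ + c + (E - p)) := by
      have e3 : i₁ + c + (E - p) = i₁ + c + (E - ρ - p) + ρ := by omega
      rw [e3]
      exact hE _ (by omega) (by omega)
    exact hdef ((h1.symm.trans (h3.trans h2)))
  -- (d) Cw ∉ A
  have hCA : Cw ∉ A := by
    intro hmem
    rw [hA, Finset.mem_image] at hmem
    obtain ⟨c, hcmem, hcw⟩ := hmem
    simp only [Finset.mem_range] at hcmem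
    have heqs := window_eq_iff.mp (hcw.trans rfl)
    refine chain_contradiction (Δ := E - ρ + 1 - (i₁ + c)) hρ1 (by omega) hE (by omega)
      hdef ?_
    intro z hz1 hz2
    have hs : z - (i₁ + c) < K := by omega
    have h := heqs (z - (i₁ + c)) hs
    have e1 : i₁ + c + (z - (i₁ + c)) = z := by omega
    have e2 : E - ρ + 1 + (z - (i₁ + c)) = z + (E - ρ + 1 - (i₁ + c)) := by omega
    rw [e1, e2] at h
    exact h
  -- (e) Cw ∉ B
  have hCB : Cw ∉ B := by
    intro hmem
    rw [hB, Finset.mem_image] at hmem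
    obtain ⟨p, hpmem, hpw⟩ := hmem
    simp only [Finset.mem_Icc] at hpmem
    have heqs := window_eq_iff.mp hpw
    refine chain_contradiction (Δ := E - ρ + 1 - p) hρ1 (by omega) hE (by omega) hdef ?_
    intro z hz1 hz2
    have hs : z - p < K := by omega
    have h := heqs (z - p) hs
    have e1 : p + (z - p) = z := by omega
    have e2 : E - ρ + 1 + (z - p) = z + (E - ρ + 1 - p) := by omega
    rw [e1, e2] at h
    exact h
  -- assemble the contradiction
  have hsub : A ∪ B ∪ {Cw} ⊆ V := by
    intro w hw
    simp only [Finset.mem_union, Finset.mem_singleton] at hw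
    rcases hw with (hw | hw) | hw
    · rw [hA, Finset.mem_image] at hw
      obtain ⟨c, hcmem, rfl⟩ := hw
      simp only [Finset.mem_range] at hcmem
      exact hwin _ (by omega)
    · rw [hB, Finset.mem_image] at hw
      obtain ⟨p, hpmem, rfl⟩ := hw
      simp only [Finset.mem_Icc] at hpmem
      exact hwin _ (by omega)
    · rw [hw, hCw]
      exact hwin _ (by omega)
  have hdisj1 : Disjoint A B := by
    rw [Finset.disjoint_left]
    intro w hwA hwB
    exact hABdisj w hwA hwB
  have hdisj2 : Disjoint (A ∪ B) ({Cw} : Finset (List α)) := by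
    rw [Finset.disjoint_right]
    intro w hw hw2
    simp only [Finset.mem_singleton] at hw
    subst hw
    rcases Finset.mem_union.mp hw2 with h | h
    · exact hCA h
    · exact hCB h
  have hcard : (A ∪ B ∪ {Cw}).card = K + 1 := by
    rw [Finset.card_union_of_disjoint hdisj2, Finset.card_union_of_disjoint hdisj1,
      hAcard, hBcard, Finset.card_singleton]
    omega
  have hle := Finset.card_le_card hsub
  omega




variable {G : Type*} [Group G] {S : Set G}


/-! ### lexicographic helper lemmas -/

lemma lex_same_len {β : Type*} [LinearOrder β] {s t : List β}
    (h : List.Lex (· < ·) s t) (hlen : s.length = t.length) (w w' : List β) :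
    List.Lex (· < ·) (s ++ w) (t ++ w') := by
  induction h generalizing w w' with
  | nil => simp at hlen
  | @cons a l₁ l₂ h ih =>
    have := ih (by simpa using hlen) w w'
    exact List.Lex.cons this
  | rel h => exact List.Lex.rel h

lemma lex_append_lt {β : Type*} [LinearOrder β] {u s t w w' : List β}
    (hst : s < t) (hlen : s.length = t.length) :
    u ++ (s ++ w) < u ++ (t ++ w') :=
  List.Lex.append_left _ (lex_same_len hst hlen w w') u

/-! ### the language of canonical geodesic words -/

/-- the set of geodesic words representing `x` -/
def geoWords (S : Set G) (x : G) : Set (List G) :=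
  {l | (∀ g ∈ l, g ∈ T S) ∧ l.length = (cayleyGraph S).dist 1 x ∧ l.prod = x}

lemma geoWords_finite (hS : S.Finite) (x : G) : (geoWords S x).Finite := by
  apply Set.Finite.subset (words_finite (T_finite hS) ((cayleyGraph S).dist 1 x))
  rintro l ⟨h1, h2, h3⟩
  exact ⟨h1, le_of_eq h2⟩

lemma geoWords_nonempty (hgen : Subgroup.closure S = ⊤) (x : G) :
    (geoWords S x).Nonempty := by
  obtain ⟨l, h1, h2, h3⟩ := exists_word_dist hgen x
  exact ⟨l, h1, h2, h3⟩

/-- the canonical (lex-least) geodesic word representing `x` -/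
noncomputable def cmin [LinearOrder G] (hS : S.Finite) (hgen : Subgroup.closure S = ⊤)
    (x : G) : List G :=
  ((geoWords_finite hS x).toFinset).min'
    (by rw [Set.Finite.toFinset_nonempty]; exact geoWords_nonempty hgen x)

lemma cmin_mem [LinearOrder G] (hS : S.Finite) (hgen : Subgroup.closure S = ⊤) (x : G) :
    cmin hS hgen x ∈ geoWords S x := by
  have := ((geoWords_finite hS x).toFinset).min'_mem
    (by rw [Set.Finite.toFinset_nonempty]; exact geoWords_nonempty hgen x)
  rwa [Set.Finite.mem_toFinset] at this

lemma cmin_le [LinearOrder G] (hS : S.Finite) (hgen : Subgroup.closure S = ⊤) {x : G}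
    {l : List G} (hl : l ∈ geoWords S x) : cmin hS hgen x ≤ l :=
  Finset.min'_le _ _ (by rwa [Set.Finite.mem_toFinset])

/-- a factor of a geodesic word is geodesic -/
lemma geo_factor (hgen : Subgroup.closure S = ⊤) {u v w : List G}
    (hT : ∀ g ∈ u ++ v ++ w, g ∈ T S)
    (hgeo : (cayleyGraph S).dist 1 (u ++ v ++ w).prod = (u ++ v ++ w).length) :
    (cayleyGraph S).dist 1 v.prod = v.length := by
  have hvT : ∀ g ∈ v, g ∈ T S := fun g hg => hT g (by simp [hg])
  have hle : (cayleyGraph S).dist 1 v.prod ≤ v.length := by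
    have := dist_le_word hgen 1 v hvT
    simpa using this
  rcases eq_or_lt_of_le hle with h | h
  · exact h
  · exfalso
    obtain ⟨l', h1, h2, h3⟩ := exists_word_dist hgen v.prod
    have hlen' : l'.length < v.length := by omega
    have hprod : (u ++ l' ++ w).prod = (u ++ v ++ w).prod := by
      simp [List.prod_append, h3]
    have hword : ∀ g ∈ u ++ l' ++ w, g ∈ T S := by
      intro g hg
      simp only [List.mem_append] at hg
      rcases hg with (hg | hg) | hg
      · exact hT g (by simp [hg])
      · exact h1 g hg
      · exact hT g (by simp [hg])
    have := dist_le_word hgen 1 (u ++ l' ++ w) hword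
    simp only [one_mul] at this
    rw [hprod, hgeo] at this
    simp only [List.length_append] at this ⊢
    omega

/-- factors of canonical words are canonical -/
lemma cmin_factor [LinearOrder G] (hS : S.Finite) (hgen : Subgroup.closure S = ⊤) {x : G}
    {u v w : List G} (h : cmin hS hgen x = u ++ (v ++ w)) :
    v = cmin hS hgen v.prod := by
  obtain ⟨hT, hlen, hprod⟩ := cmin_mem hS hgen x
  rw [h] at hT hlen hprod
  have hTuvw : ∀ g ∈ u ++ v ++ w, g ∈ T S := by
    intro g hg; apply hT; simpa [List.append_assoc] using hg
  have hgeo : (cayleyGraph S).dist 1 (u ++ v ++ w).prod = (u ++ v ++ w).length := by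
    rw [List.append_assoc, hprod, ← hlen]
  have hvgeo : (cayleyGraph S).dist 1 v.prod = v.length := geo_factor hgen hTuvw hgeo
  have hvmem : v ∈ geoWords S v.prod :=
    ⟨fun g hg => hT g (by simp [hg]), hvgeo.symm, rfl⟩
  have hmle : cmin hS hgen v.prod ≤ v := cmin_le hS hgen hvmem
  rcases eq_or_lt_of_le hmle with heq | hlt
  · exact heq.symm
  · exfalso
    -- the replaced word is a smaller geodesic word for x
    set m := cmin hS hgen v.prod with hm
    obtain ⟨hmT, hmlen, hmprod⟩ := cmin_mem hS hgen v.prod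
    have hmlen' : m.length = (cayleyGraph S).dist 1 v.prod := by rw [hm]; exact hmlen
    have hlenm : m.length = v.length := hmlen'.trans hvgeo
    have hsmaller : u ++ (m ++ w) < u ++ (v ++ w) :=
      lex_append_lt hlt hlenm
    have hmemx : u ++ (m ++ w) ∈ geoWords S x := by
      refine ⟨?_, ?_, ?_⟩
      · intro g hg
        simp only [List.mem_append] at hg
        rcases hg with hg | hg | hg
        · exact hT g (by simp [hg])
        · exact hmT g (by rwa [← hm])
        · exact hT g (by simp [hg])
      · have : (u ++ (m ++ w)).length = (u ++ (v ++ w)).length := by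
          simp [hlenm]
        rw [this, ← h]
        exact (cmin_mem hS hgen x).2.1
      · have hmp : m.prod = v.prod := by rw [hm]; exact hmprod
        have : (u ++ (m ++ w)).prod = (u ++ (v ++ w)).prod := by
          simp [List.prod_append, hmp]
        rw [this]
        exact hprod
    have := cmin_le hS hgen hmemx
    rw [h] at this
    exact absurd hsmaller (not_lt_of_ge this)


/-! ### spheres -/

/-- the sphere of radius `n` -/
def sphere (S : Set G) (n : ℕ) : Set G := {x : G | (cayleyGraph S).dist 1 x = n}

lemma sphere_subset_ball (n : ℕ) : sphere S n ⊆ ball S n := fun _ hx => le_of_eq hx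

lemma sphere_finite (hS : S.Finite) (hgen : Subgroup.closure S = ⊤) (n : ℕ) :
    (sphere S n).Finite :=
  (ball_finite hS hgen n).subset (sphere_subset_ball n)

lemma ballCard_succ_eq (hS : S.Finite) (hgen : Subgroup.closure S = ⊤) (n : ℕ) :
    ballCard S (n + 1) = ballCard S n + (sphere S (n + 1)).ncard := by
  have hunion : ball S (n + 1) = ball S n ∪ sphere S (n + 1) := by
    ext x
    simp only [ball, sphere, Set.mem_setOf_eq, Set.mem_union]
    omega
  rw [ballCard_eq, ballCard_eq, hunion,
    Set.ncard_union_eq ?_ (ball_finite hS hgen n) (sphere_finite hS hgen (n + 1))]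
  rw [Set.disjoint_left]
  intro x hx1 hx2
  have : (cayleyGraph S).dist 1 x = n + 1 := hx2
  have : (cayleyGraph S).dist 1 x ≤ n := hx1
  omega

/-! ### list helper lemmas -/

lemma getD_take {l : List G} {m i : ℕ} (h : i < m) :
    (l.take m).getD i 1 = l.getD i 1 := by
  rcases Nat.lt_or_ge i l.length with h2 | h2
  · rw [List.getD_eq_getElem l 1 h2, List.getD_eq_getElem _ 1 (by
      rw [List.length_take]; omega)]
    simp [List.getElem_take]
  · rw [List.getD_eq_default _ 1 (by rw [List.length_take]; omega),
      List.getD_eq_default _ 1 h2]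

lemma getD_drop {l : List G} {m j : ℕ} :
    (l.drop m).getD j 1 = l.getD (m + j) 1 := by
  rcases Nat.lt_or_ge (m + j) l.length with h2 | h2
  · rw [List.getD_eq_getElem l 1 h2, List.getD_eq_getElem _ 1 (by
      rw [List.length_drop]; omega)]
    rw [List.getElem_drop]
  · rw [List.getD_eq_default _ 1 (by rw [List.length_drop]; omega),
      List.getD_eq_default _ 1 h2]

lemma window_eq_factor {l : List G} {Kk i : ℕ} (h : i + Kk ≤ l.length) :
    window (fun j => l.getD j 1) Kk i = (l.drop i).take Kk := by
  apply List.ext_getElem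
  · simp only [window, List.length_ofFn, List.length_take, List.length_drop]
    omega
  · intro s hs1 hs2
    simp only [window, List.getElem_ofFn]
    rw [List.getElem_take, List.getElem_drop]
    rw [List.getD_eq_getElem l 1 (by
      simp only [List.length_take, List.length_drop] at hs2
      omega)]

lemma factor_decomp (l : List G) (i Kk : ℕ) :
    l = l.take i ++ (((l.drop i).take Kk) ++ (l.drop (i + Kk))) := by
  have h1 : l.drop (i + Kk) = (l.drop i).drop Kk := by
    rw [List.drop_drop, Nat.add_comm]
  rw [h1, List.take_append_drop, List.take_append_drop]

/-- the windows of a canonical geodesic word are canonical geodesic words of spheres -/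
lemma window_mem [LinearOrder G] (hS : S.Finite) (hgen : Subgroup.closure S = ⊤)
    {x : G} {n : ℕ} (hx : x ∈ sphere S n) {Kk i : ℕ} (hi : i + Kk ≤ n) :
    window (fun j => (cmin hS hgen x).getD j 1) Kk i ∈
      (fun y => cmin hS hgen y) '' sphere S Kk := by
  obtain ⟨hT, hlen, hprod⟩ := cmin_mem hS hgen x
  have hlength : (cmin hS hgen x).length = n := by rw [hlen]; exact hx
  have hdecomp : cmin hS hgen x = (cmin hS hgen x).take i ++
      ((((cmin hS hgen x).drop i).take Kk) ++ ((cmin hS hgen x).drop (i + Kk))) :=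
    factor_decomp _ i Kk
  set v := ((cmin hS hgen x).drop i).take Kk with hv
  have hvc : v = cmin hS hgen v.prod := cmin_factor hS hgen hdecomp
  have hvlen : v.length = Kk := by
    rw [hv, List.length_take, List.length_drop]
    omega
  have hvsp : v.prod ∈ sphere S Kk := by
    have h1 := (cmin_mem hS hgen v.prod).2.1
    rw [← hvc] at h1
    show (cayleyGraph S).dist 1 v.prod = Kk
    omega
  refine ⟨v.prod, hvsp, ?_⟩
  show cmin hS hgen v.prod = _
  rw [← hvc, window_eq_factor (by omega)]

/-- CORE: an infinite group with a small sphere has linear growth. -/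
lemma core (hS : S.Finite) (hgen : Subgroup.closure S = ⊤) (hinf : Infinite G) (k : ℕ)
    (hk : ballCard S (k + 1) ≤ ballCard S k + (k + 1)) :
    ∃ C : ℕ, ∀ n, ballCard S n ≤ C * (n + 1) := by
  classical
  letI : LinearOrder G := IsWellOrder.linearOrder WellOrderingRel
  set K := k + 1 with hKdef
  have hK1 : 1 ≤ K := by omega
  have hsK : (sphere S K).ncard ≤ K := by
    have h0 := ballCard_succ_eq hS hgen k
    rw [← hKdef] at h0
    omega
  set VK : Finset (List G) :=
    ((sphere_finite hS hgen K).toFinset).image (fun y => cmin hS hgen y) with hVKdef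
  have hVKcard : VK.card ≤ K := by
    calc VK.card ≤ ((sphere_finite hS hgen K).toFinset).card := Finset.card_image_le
      _ = (sphere S K).ncard := (Set.ncard_eq_toFinset_card _ (sphere_finite hS hgen K)).symm
      _ ≤ K := hsK
  have hVKmem : ∀ {x : G} {n : ℕ}, x ∈ sphere S n → ∀ i, i + K ≤ n →
      window (fun j => (cmin hS hgen x).getD j 1) K i ∈ VK := by
    intro x n hx i hi
    obtain ⟨y, hy1, hy2⟩ := window_mem hS hgen hx hi
    rw [hVKdef, Finset.mem_image]
    exact ⟨y, by rwa [Set.Finite.mem_toFinset], hy2⟩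
  -- the data set
  set D : Set (List G × List G × ℕ) :=
    {l : List G | (∀ g ∈ l, g ∈ T S) ∧ l.length ≤ 2 * K} ×ˢ
    ({l : List G | (∀ g ∈ l, g ∈ T S) ∧ l.length ≤ K} ×ˢ Set.Iic K) with hD
  have hDfin : D.Finite :=
    (words_finite (T_finite hS) (2 * K)).prod
      ((words_finite (T_finite hS) K).prod (Set.finite_Iic K))
  -- sphere bound for large n
  have hsphere : ∀ n, 3 * K ≤ n → (sphere S n).ncard ≤ D.ncard := by
    intro n hn
    set P : G → ℕ → Prop := fun x ρ => ∃ a E, a ≤ K ∧ 1 ≤ ρ ∧ ρ ≤ K ∧ a + ρ + K ≤ E ∧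
        E ≤ n ∧ n + ρ ≤ E + K ∧
        HasPeriodOn (fun j => (cmin hS hgen x).getD j 1) a E ρ with hP
    have hstruct : ∀ x ∈ sphere S n, ∃ ρ, P x ρ := by
      intro x hx
      have hlength : (cmin hS hgen x).length = n := by
        rw [(cmin_mem hS hgen x).2.1]; exact hx
      obtain ⟨a, ρ, E, h1, h2, h3, h4, h5, h6, h7⟩ :=
        exists_decomposition (fun j => (cmin hS hgen x).getD j 1) n K hK1 (by omega) VK
          hVKcard (fun i hi => hVKmem hx i hi)
      exact ⟨ρ, a, E, h1, h2, h3, h4, h5, h6, h7⟩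
    set ρsel : G → ℕ := fun x => if h : ∃ ρ, P x ρ then Classical.choose h else 0 with hρsel
    have hρspec : ∀ x ∈ sphere S n, P x (ρsel x) := by
      intro x hx
      have h := hstruct x hx
      rw [hρsel]
      simp only [dif_pos h]
      exact Classical.choose_spec h
    set F : G → List G × List G × ℕ := fun x =>
      ((cmin hS hgen x).take (2 * K), (cmin hS hgen x).drop (n - K), ρsel x) with hF
    have hlen_of : ∀ x ∈ sphere S n, (cmin hS hgen x).length = n := by
      intro x hx
      rw [(cmin_mem hS hgen x).2.1]; exact hx
    apply Set.ncard_le_ncard_of_injOn F ?_ ?_ hDfin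
    · -- maps into D
      intro x hx
      obtain ⟨hTm, _, _⟩ := cmin_mem hS hgen x
      have hlength := hlen_of x hx
      obtain ⟨a, E, _, _, hρK, _, _, _, _⟩ := hρspec x hx
      refine ⟨⟨?_, ?_⟩, ⟨?_, ?_⟩, ?_⟩
      · exact fun g hg => hTm g ((List.take_sublist _ _).subset hg)
      · rw [List.length_take]; omega
      · exact fun g hg => hTm g ((List.drop_sublist _ _).subset hg)
      · rw [List.length_drop]; omega
      · exact hρK
    · -- injective on the sphere
      intro x hx x' hx' heq
      rw [hF] at heq
      simp only [Prod.mk.injEq] at heq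
      obtain ⟨e1, e2, e3⟩ := heq
      obtain ⟨a, E, haK, hρ1, hρK, hzone, hEn, hEK, hper⟩ := hρspec x hx
      obtain ⟨a', E', haK', hρ1', hρK', hzone', hEn', hEK', hper'⟩ := hρspec x' hx'
      rw [e3] at hρ1 hρK hzone hEK hper
      have hlen1 := hlen_of x hx
      have hlen2 := hlen_of x' hx'
      have hw : ∀ i, i < n → (cmin hS hgen x).getD i 1 = (cmin hS hgen x').getD i 1 := by
        intro i
        induction i using Nat.strong_induction_on with
        | _ i ih =>
          intro hi
          rcases Nat.lt_or_ge i (2 * K) with hc1 | hc1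
          · have h := congrArg (fun l => l.getD i 1) e1
            simpa only [getD_take hc1] using h
          · rcases Nat.lt_or_ge i (n - K) with hc2 | hc2
            · have hx1 : (cmin hS hgen x).getD i 1 =
                  (cmin hS hgen x).getD (i - ρsel x') 1 := by
                have h := hper (i - ρsel x') (by omega) (by omega)
                rw [Nat.sub_add_cancel (by omega)] at h
                exact h.symm
              have hx2 : (cmin hS hgen x').getD i 1 =
                  (cmin hS hgen x').getD (i - ρsel x') 1 := by
                have h := hper' (i - ρsel x') (by omega) (by omega)
                rw [Nat.sub_add_cancel (by omega)] at h
                exact h.symm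
              rw [hx1, hx2]
              exact ih (i - ρsel x') (by omega) (by omega)
            · have h := congrArg (fun l => l.getD (i - (n - K)) 1) e2
              simp only [getD_drop] at h
              have he : n - K + (i - (n - K)) = i := by omega
              rwa [he] at h
      have hww : cmin hS hgen x = cmin hS hgen x' := by
        apply List.ext_getElem (by rw [hlen1, hlen2])
        intro i h1 h2
        have h := hw i (by omega)
        rwa [List.getD_eq_getElem _ 1 h1, List.getD_eq_getElem _ 1 h2] at h
      have h := congrArg List.prod hww
      rwa [(cmin_mem hS hgen x).2.2, (cmin_mem hS hgen x').2.2] at h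
  -- assemble the linear bound
  set M := D.ncard + ballCard S (3 * K) with hM
  have hs_all : ∀ n : ℕ, (sphere S (n + 1)).ncard ≤ M := by
    intro n
    rcases Nat.lt_or_ge (n + 1) (3 * K) with h | h
    · have hsub : sphere S (n + 1) ⊆ ball S (3 * K) := fun x hx =>
        le_trans (le_of_eq hx) (by omega)
      calc (sphere S (n + 1)).ncard ≤ ballCard S (3 * K) :=
            Set.ncard_le_ncard hsub (ball_finite hS hgen (3 * K))
        _ ≤ M := by omega
    · calc (sphere S (n + 1)).ncard ≤ D.ncard := hsphere _ h
        _ ≤ M := by omega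
  refine ⟨ballCard S 0 + M, ?_⟩
  intro n
  induction n with
  | zero =>
    have : (ballCard S 0 + M) * (0 + 1) = ballCard S 0 + M := by ring
    omega
  | succ n ih =>
    have h1 := ballCard_succ_eq hS hgen n
    have h2 := hs_all n
    have h3 : (ballCard S 0 + M) * (n + 1 + 1) = (ballCard S 0 + M) * (n + 1) +
        (ballCard S 0 + M) := by ring
    omega

lemma quad (hS : S.Finite) (hgen : Subgroup.closure S = ⊤)
    (hq : ∀ j : ℕ, ballCard S j + (j + 2) ≤ ballCard S (j + 1)) :
    ∀ n : ℕ, (n + 1) * (n + 2) ≤ 2 * ballCard S n := by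
  intro n
  induction n with
  | zero =>
    have := ballCard_pos hS hgen 0
    omega
  | succ n ih =>
    have h := hq n
    nlinarith [h, ih]

lemma not_quad (h : ∃ α β : ℝ, 0 ≤ α ∧ 0 ≤ β ∧ ∀ n : ℕ, (ballCard S n : ℝ) ≤ α * n + β) :
    ¬ (∀ n : ℕ, (n + 1) * (n + 2) ≤ 2 * ballCard S n) := by
  obtain ⟨α, β, hα, hβ, hb⟩ := h
  intro hQ
  set n : ℕ := ⌈2 * α⌉₊ + ⌈2 * β⌉₊ + 1 with hn
  have h1 : ((n + 1) * (n + 2) : ℝ) ≤ 2 * (ballCard S n) := by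
    have := hQ n
    have := (Nat.cast_le (α := ℝ)).mpr this
    push_cast at this ⊢
    linarith
  have h2 : (ballCard S n : ℝ) ≤ α * n + β := hb n
  have h3 : 2 * α ≤ (n : ℝ) := by
    calc 2 * α ≤ (⌈2 * α⌉₊ : ℝ) := Nat.le_ceil _
      _ ≤ n := by exact_mod_cast Nat.le_of_lt_succ (by omega)
  have h4 : 2 * β + 1 ≤ (n : ℝ) := by
    have : (⌈2 * β⌉₊ + 1 : ℕ) ≤ n := by omega
    calc 2 * β + 1 ≤ (⌈2 * β⌉₊ : ℝ) + 1 := by linarith [Nat.le_ceil (2 * β)]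
      _ ≤ n := by exact_mod_cast this
  have hn0 : (0 : ℝ) ≤ n := Nat.cast_nonneg n
  nlinarith [mul_nonneg (sub_nonneg.mpr h3) hn0]

lemma linear_of_core (hC : ∃ C : ℕ, ∀ n, ballCard S n ≤ C * (n + 1)) :
    ∃ α β : ℝ, 0 ≤ α ∧ 0 ≤ β ∧ ∀ n : ℕ, (ballCard S n : ℝ) ≤ α * n + β := by
  obtain ⟨C, hC⟩ := hC
  refine ⟨C, C, Nat.cast_nonneg C, Nat.cast_nonneg C, fun n => ?_⟩
  have := (Nat.cast_le (α := ℝ)).mpr (hC n)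
  push_cast at this
  linarith

lemma linear_of_finite (hfin : Finite G) :
    ∃ α β : ℝ, 0 ≤ β ∧ ∀ n : ℕ, (ballCard S n : ℝ) ≤ β := by
  refine ⟨0, (Set.univ : Set G).ncard, Nat.cast_nonneg _, fun n => ?_⟩
  have h : ballCard S n ≤ (Set.univ : Set G).ncard :=
    Set.ncard_le_ncard (Set.subset_univ _) Set.finite_univ
  exact_mod_cast h





end WvdD

/-- **Wilkie–Van den Dries growth dichotomy.** For the Cayley graph of a finitely generated
group, exactly one of the following holds: either the growth is linear, i.e. there are
`α, β ≥ 0` with `b(n) ≤ αn + β` for all `n`, or `b(n) ≥ (n+1)(n+2)/2` for all `n`. -/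
theorem stmt_13 {G : Type*} [Group G] (S : Set G) (hS : S.Finite)
    (hgen : Subgroup.closure S = ⊤) :
    Xor' (∃ α β : ℝ, 0 ≤ α ∧ 0 ≤ β ∧ ∀ n : ℕ, (ballCard S n : ℝ) ≤ α * n + β)
      (∀ n : ℕ, (n + 1) * (n + 2) ≤ 2 * ballCard S n) := by
  by_cases h1 : ∃ α β : ℝ, 0 ≤ α ∧ 0 ≤ β ∧ ∀ n : ℕ, (ballCard S n : ℝ) ≤ α * n + β
  · exact Or.inl ⟨h1, WvdD.not_quad h1⟩
  · refine Or.inr ⟨?_, h1⟩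
    cases finite_or_infinite G with
    | inl hfin =>
      exfalso
      obtain ⟨α, β, hβ, hb⟩ := WvdD.linear_of_finite (S := S) hfin
      exact h1 ⟨0, β, le_refl 0, hβ, fun n => by simpa using hb n⟩
    | inr hinf =>
      by_cases hq : ∀ j : ℕ, ballCard S j + (j + 2) ≤ ballCard S (j + 1)
      · exact WvdD.quad hS hgen hq
      · exfalso
        push_neg at hq
        obtain ⟨k, hk⟩ := hq
        exact h1 (WvdD.linear_of_core (WvdD.core hS hgen hinf k (by omega)))
end
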